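/- arXiv:2605.07120 — 6 statements merged into one kernel-verified Lean document; each statement's English description precedes it below -/
import Mathlib

section
/- The dual objective D_K has a unique minimizer c* over the cube [0,1]^n, and this minimizer lies in the open cube: c* ∈ (0,1)^n. -/
open Matrix Set

/-- Binary entropy potential, with Lean's convention `Real.log 0 = 0`. -/
noncomputable def phiEnt (c : ℝ) : ℝ := c * Real.log c + (1 - c) * Real.log (1 - c)

/-- The dual objective
`D_K(c) = (1/n)·∑ᵢ φ(cᵢ) + (1/(2λn²))·(y⊙c)ᵀ K (y⊙c)`. -/
noncomputable def dualObj {n : ℕ} (lam : ℝ) (y : Fin n → ℝ)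
    (K : Matrix (Fin n) (Fin n) ℝ) (c : Fin n → ℝ) : ℝ :=
  (1 / n) * ∑ i, phiEnt (c i) +
    (1 / (2 * lam * (n : ℝ) ^ 2)) * ((fun i => y i * c i) ⬝ᵥ (K *ᵥ fun i => y i * c i))

lemma phiEnt_continuous : Continuous phiEnt := by
  have h1 := Real.continuous_mul_log
  have h2 : Continuous fun c : ℝ => (1 - c) * Real.log (1 - c) :=
    h1.comp (continuous_const.sub continuous_id)
  exact h1.add h2

lemma phiEnt_zero : phiEnt 0 = 0 := by simp [phiEnt]

lemma phiEnt_one : phiEnt 1 = 0 := by simp [phiEnt]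

lemma strictConvexOn_phiEnt : StrictConvexOn ℝ (Icc (0:ℝ) 1) phiEnt := by
  have h1 : StrictConvexOn ℝ (Icc (0:ℝ) 1) (fun c : ℝ => c * Real.log c) :=
    Real.strictConvexOn_mul_log.subset Icc_subset_Ici_self (convex_Icc 0 1)
  have h2 : StrictConvexOn ℝ (Icc (0:ℝ) 1) (fun c : ℝ => (1 - c) * Real.log (1 - c)) := by
    refine ⟨convex_Icc 0 1, ?_⟩
    intro x hx z hz hxz a b ha hb hab
    have hx' : (1:ℝ) - x ∈ Ici (0:ℝ) := by simp [hx.2]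
    have hz' : (1:ℝ) - z ∈ Ici (0:ℝ) := by simp [hz.2]
    have hne : (1:ℝ) - x ≠ 1 - z := by intro h; apply hxz; linarith
    have := Real.strictConvexOn_mul_log.2 hx' hz' hne ha hb hab
    have harg : a • ((1:ℝ) - x) + b • ((1:ℝ) - z) = 1 - (a • x + b • z) := by
      simp only [smul_eq_mul]; nlinarith [hab]
    rw [harg] at this
    simpa using this
  exact h1.add h2

lemma cube_convex {n : ℕ} : Convex ℝ {c : Fin n → ℝ | ∀ i, c i ∈ Icc (0:ℝ) 1} := by
  intro x hx z hz a b ha hb hab i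
  exact (convex_Icc (0:ℝ) 1) (hx i) (hz i) ha hb hab

lemma strictConvexOn_entSum {n : ℕ} :
    StrictConvexOn ℝ {c : Fin n → ℝ | ∀ i, c i ∈ Icc (0:ℝ) 1}
      (fun c : Fin n → ℝ => ∑ i, phiEnt (c i)) := by
  refine ⟨cube_convex, ?_⟩
  intro x hx z hz hxz a b ha hb hab
  obtain ⟨i, hi⟩ := Function.ne_iff.mp hxz
  have hle : ∀ j ∈ Finset.univ, phiEnt ((a • x + b • z) j) ≤ a * phiEnt (x j) + b * phiEnt (z j) := by
    intro j _
    have := strictConvexOn_phiEnt.convexOn.2 (hx j) (hz j) ha.le hb.le hab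
    simpa using this
  have hlt : phiEnt ((a • x + b • z) i) < a * phiEnt (x i) + b * phiEnt (z i) := by
    have := strictConvexOn_phiEnt.2 (hx i) (hz i) hi ha hb hab
    simpa using this
  have := Finset.sum_lt_sum hle ⟨i, Finset.mem_univ i, hlt⟩
  calc (fun c : Fin n → ℝ => ∑ i, phiEnt (c i)) (a • x + b • z)
      = ∑ j, phiEnt ((a • x + b • z) j) := rfl
    _ < ∑ j, (a * phiEnt (x j) + b * phiEnt (z j)) := this
    _ = a • ∑ j, phiEnt (x j) + b • ∑ j, phiEnt (z j) := by
        rw [Finset.sum_add_distrib, ← Finset.mul_sum, ← Finset.mul_sum]; simp [smul_eq_mul]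

lemma quad_expand {n : ℕ} (K : Matrix (Fin n) (Fin n) ℝ) (p q : Fin n → ℝ) (s t : ℝ) :
    (s • p + t • q) ⬝ᵥ K *ᵥ (s • p + t • q) =
      s*s*(p ⬝ᵥ K *ᵥ p) + s*t*(p ⬝ᵥ K *ᵥ q) + t*s*(q ⬝ᵥ K *ᵥ p) + t*t*(q ⬝ᵥ K *ᵥ q) := by
  simp only [Matrix.mulVec_add, Matrix.mulVec_smul, add_dotProduct, dotProduct_add,
    smul_dotProduct, dotProduct_smul, smul_eq_mul]
  ring

lemma psd_nonneg {n : ℕ} {K : Matrix (Fin n) (Fin n) ℝ} (hK : K.PosSemidef) (x : Fin n → ℝ) :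
    0 ≤ x ⬝ᵥ K *ᵥ x := by
  have := hK.dotProduct_mulVec_nonneg x
  simpa using this

lemma convexOn_quad {n : ℕ} (K : Matrix (Fin n) (Fin n) ℝ) (hK : K.PosSemidef) (y : Fin n → ℝ) :
    ConvexOn ℝ (univ : Set (Fin n → ℝ))
      (fun c : Fin n → ℝ => (fun i => y i * c i) ⬝ᵥ (K *ᵥ fun i => y i * c i)) := by
  refine ⟨convex_univ, ?_⟩
  intro x _ z _ a b ha hb hab
  dsimp only
  set v : Fin n → ℝ := fun i => y i * x i with hv
  set w : Fin n → ℝ := fun i => y i * z i with hw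
  have hvec : (fun i => y i * (a • x + b • z) i) = a • v + b • w := by
    funext j; simp [hv, hw]; ring
  have hpsd : 0 ≤ (v - w) ⬝ᵥ K *ᵥ (v - w) := psd_nonneg hK _
  have e2 : v - w = (1:ℝ) • v + (-1:ℝ) • w := by simp [sub_eq_add_neg]
  rw [e2, quad_expand] at hpsd
  simp only [hvec]
  rw [quad_expand]
  simp only [smul_eq_mul]
  have hb' : b = 1 - a := by linarith
  subst hb'
  nlinarith [mul_nonneg (mul_nonneg ha hb) hpsd]

lemma dualObj_continuous {n : ℕ} (lam : ℝ) (y : Fin n → ℝ) (K : Matrix (Fin n) (Fin n) ℝ) :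
    Continuous (dualObj lam y K) := by
  unfold dualObj
  apply Continuous.add
  · exact continuous_const.mul (continuous_finset_sum _ fun i _ =>
      phiEnt_continuous.comp (continuous_apply i))
  · apply continuous_const.mul
    simp only [dotProduct, Matrix.mulVec]
    apply continuous_finset_sum
    intro i _
    apply Continuous.mul
    · exact continuous_const.mul (continuous_apply i)
    · exact continuous_finset_sum _ fun j _ =>
        continuous_const.mul (continuous_const.mul (continuous_apply j))

lemma strictConvexOn_dualObj {n : ℕ} (hn : 0 < n) (K : Matrix (Fin n) (Fin n) ℝ)
    (hK : K.PosSemidef) (y : Fin n → ℝ) (lam : ℝ) (hlam : 0 < lam) :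
    StrictConvexOn ℝ {c : Fin n → ℝ | ∀ i, c i ∈ Icc (0:ℝ) 1} (dualObj lam y K) := by
  set S := {c : Fin n → ℝ | ∀ i, c i ∈ Icc (0:ℝ) 1}
  have hnpos : (0:ℝ) < (n:ℝ) := by exact_mod_cast hn
  have hmu : (0:ℝ) ≤ 1 / (2 * lam * (n : ℝ) ^ 2) := by positivity
  have hE : StrictConvexOn ℝ S (fun c : Fin n → ℝ => (1/(n:ℝ)) * ∑ i, phiEnt (c i)) := by
    refine ⟨cube_convex, ?_⟩
    intro x hx z hz hxz a b ha hb hab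
    have := strictConvexOn_entSum.2 hx hz hxz ha hb hab
    have h1n : (0:ℝ) < 1/(n:ℝ) := by positivity
    simp only [smul_eq_mul] at this ⊢
    nlinarith [this]
  have hQ : ConvexOn ℝ S (fun c : Fin n → ℝ =>
      (1 / (2 * lam * (n : ℝ) ^ 2)) * ((fun i => y i * c i) ⬝ᵥ (K *ᵥ fun i => y i * c i))) := by
    have := ((convexOn_quad K hK y).smul hmu).subset (subset_univ S) cube_convex
    simpa [smul_eq_mul] using this
  have heq : dualObj lam y K = (fun c : Fin n → ℝ => (1/(n:ℝ)) * ∑ i, phiEnt (c i)) +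
      (fun c : Fin n → ℝ =>
        (1 / (2 * lam * (n : ℝ) ^ 2)) * ((fun i => y i * c i) ⬝ᵥ (K *ᵥ fun i => y i * c i))) := by
    funext c; simp [dualObj, Pi.add_apply]
  rw [heq]
  exact hE.add_convexOn hQ

lemma update_mem_cube {n : ℕ} {c : Fin n → ℝ} (hc : ∀ i, c i ∈ Icc (0:ℝ) 1) (i : Fin n)
    {t : ℝ} (ht : t ∈ Icc (0:ℝ) 1) :
    Function.update c i t ∈ {c' : Fin n → ℝ | ∀ j, c' j ∈ Icc (0:ℝ) 1} := by
  intro j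
  by_cases h : j = i
  · subst h; simpa using ht
  · rw [Function.update_of_ne h]; exact hc j

lemma dualObj_update {n : ℕ} (hn : 0 < n) (lam : ℝ) (hlam : 0 < lam) (y : Fin n → ℝ)
    (K : Matrix (Fin n) (Fin n) ℝ) (c : Fin n → ℝ) (i : Fin n) (t : ℝ) :
    dualObj lam y K (Function.update c i t) =
      dualObj lam y K c + (1/(n:ℝ)) * (phiEnt t - phiEnt (c i)) +
        (1 / (2 * lam * (n : ℝ) ^ 2)) *
          ((t - c i) * ((fun j => y j * c j) ⬝ᵥ K *ᵥ (fun j => y j * (if j = i then (1:ℝ) else 0))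
              + (fun j => y j * (if j = i then (1:ℝ) else 0)) ⬝ᵥ K *ᵥ (fun j => y j * c j))
            + (t - c i)^2 * ((fun j => y j * (if j = i then (1:ℝ) else 0)) ⬝ᵥ K *ᵥ
                (fun j => y j * (if j = i then (1:ℝ) else 0)))) := by
  set u : Fin n → ℝ := fun j => y j * c j with hu
  set w : Fin n → ℝ := fun j => y j * (if j = i then (1:ℝ) else 0) with hw
  have hsum : ∑ j, phiEnt (Function.update c i t j) = ∑ j, phiEnt (c j) - phiEnt (c i) + phiEnt t := by
    have h1 : ∀ j, phiEnt (Function.update c i t j)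
        = Function.update (fun j => phiEnt (c j)) i (phiEnt t) j := by
      intro j
      by_cases h : j = i
      · subst h; simp
      · rw [Function.update_of_ne h, Function.update_of_ne h]
    rw [Finset.sum_congr rfl (fun j _ => h1 j), Finset.sum_update_of_mem (Finset.mem_univ i)]
    have h2 : ∑ j, phiEnt (c j) = phiEnt (c i) + ∑ j ∈ Finset.univ \ {i}, phiEnt (c j) := by
      rw [Finset.sdiff_singleton_eq_erase, Finset.add_sum_erase _ (fun j => phiEnt (c j)) (Finset.mem_univ i)]
    rw [h2]; ring
  have hvec : (fun j => y j * Function.update c i t j) = (1:ℝ) • u + (t - c i) • w := by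
    funext j
    by_cases h : j = i
    · subst h; simp [hu, hw]; ring
    · simp [hu, hw, Function.update_of_ne h, h]
  have hquad := quad_expand K u w 1 (t - c i)
  have husame : ((1:ℝ) • u + (t - c i) • w) = fun j => y j * Function.update c i t j := hvec.symm
  unfold dualObj
  rw [hsum, hvec, hquad]
  ring

lemma min_interior {n : ℕ} (hn : 0 < n) (K : Matrix (Fin n) (Fin n) ℝ) (hK : K.PosSemidef)
    (y : Fin n → ℝ) (lam : ℝ) (hlam : 0 < lam) (c : Fin n → ℝ)
    (hc : ∀ i, c i ∈ Icc (0:ℝ) 1)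
    (hmin : IsMinOn (dualObj lam y K) {c' | ∀ i, c' i ∈ Icc (0:ℝ) 1} c) (i : Fin n) :
    c i ∈ Ioo (0:ℝ) 1 := by
  have hnpos : (0:ℝ) < (n:ℝ) := by exact_mod_cast hn
  set u : Fin n → ℝ := fun j => y j * c j with hu
  set w : Fin n → ℝ := fun j => y j * (if j = i then (1:ℝ) else 0) with hw
  set A : ℝ := u ⬝ᵥ K *ᵥ w + w ⬝ᵥ K *ᵥ u with hA
  set B : ℝ := w ⬝ᵥ K *ᵥ w with hB
  have hBnn : 0 ≤ B := psd_nonneg hK w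
  set μ : ℝ := 1 / (2 * lam * (n : ℝ) ^ 2) with hμ
  have hμpos : 0 < μ := by rw [hμ]; positivity
  set C : ℝ := μ * (|A| + B) with hC
  have hCnn : 0 ≤ C := by
    apply mul_nonneg hμpos.le
    have := abs_nonneg A
    linarith
  set s : ℝ := Real.exp (-((n:ℝ) * C + 1)) with hs
  have hspos : 0 < s := Real.exp_pos _
  have hs1 : s < 1 := by
    rw [hs]
    have h0 : -((n:ℝ) * C + 1) < 0 := by nlinarith
    calc Real.exp (-((n:ℝ) * C + 1)) < Real.exp 0 := Real.exp_lt_exp.mpr h0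
      _ = 1 := Real.exp_zero
  have hlogs : Real.log s = -((n:ℝ) * C + 1) := Real.log_exp _
  clear_value u w A B μ C s
  -- key bound: for δ with |δ| = s (and s ∈ (0,1)), quadratic part ≤ C * s
  have hquadbound : ∀ δ : ℝ, |δ| = s → μ * (δ * A + δ^2 * B) ≤ C * s := by
    intro δ hδ
    have h1 : δ * A ≤ s * |A| := by
      calc δ * A ≤ |δ * A| := le_abs_self _
        _ = |δ| * |A| := abs_mul _ _
        _ = s * |A| := by rw [hδ]
    have h2 : δ^2 * B ≤ s * B := by
      have : δ^2 = s^2 := by rw [← sq_abs, hδ]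
      rw [this]
      nlinarith [mul_nonneg (mul_nonneg hspos.le (by linarith : (0:ℝ) ≤ 1 - s)) hBnn]
    calc μ * (δ * A + δ^2 * B) ≤ μ * (s * |A| + s * B) := by
          apply mul_le_mul_of_nonneg_left _ hμpos.le; linarith
      _ = C * s := by rw [hC]; ring
  constructor
  · -- c i ≠ 0
    rcases lt_or_eq_of_le (hc i).1 with h | h
    · exact h
    exfalso
    have hci : c i = 0 := h.symm
    have hmem := update_mem_cube hc i (t := s) ⟨hspos.le, hs1.le⟩
    have hle : dualObj lam y K c ≤ dualObj lam y K (Function.update c i s) := hmin hmem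
    rw [dualObj_update hn lam hlam y K c i s] at hle
    simp only [hci, phiEnt_zero, sub_zero] at hle
    rw [← hu, ← hw, ← hA, ← hB, ← hμ] at hle
    have hqb := hquadbound s (abs_of_pos hspos)
    have hent : phiEnt s ≤ s * Real.log s := by
      have h1s : (0:ℝ) < 1 - s := by linarith
      have : (1 - s) * Real.log (1 - s) ≤ 0 := by
        apply mul_nonpos_of_nonneg_of_nonpos h1s.le
        apply Real.log_nonpos h1s.le
        linarith
      simp only [phiEnt]; linarith
    have hneg : (1/(n:ℝ)) * phiEnt s + μ * (s * A + s^2 * B) < 0 := by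
      have h1 : (1/(n:ℝ)) * phiEnt s ≤ (1/(n:ℝ)) * (s * Real.log s) := by
        apply mul_le_mul_of_nonneg_left hent (by positivity)
      have h2 : (1/(n:ℝ)) * (s * Real.log s) + C * s = -(s/(n:ℝ)) := by
        rw [hlogs]; field_simp; ring
      have h3 : (0:ℝ) < s/(n:ℝ) := by positivity
      linarith
    linarith
  · -- c i ≠ 1
    rcases lt_or_eq_of_le (hc i).2 with h | h
    · exact h
    exfalso
    have hci : c i = 1 := h
    have hmem := update_mem_cube hc i (t := 1 - s) ⟨by linarith, by linarith⟩
    have hle : dualObj lam y K c ≤ dualObj lam y K (Function.update c i (1 - s)) := hmin hmem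
    rw [dualObj_update hn lam hlam y K c i (1 - s)] at hle
    simp only [hci, phiEnt_one, sub_zero] at hle
    rw [← hu, ← hw, ← hA, ← hB, ← hμ] at hle
    have hδ : |(1 - s) - 1| = s := by rw [show (1 - s) - 1 = -s by ring, abs_neg, abs_of_pos hspos]
    have hqb := hquadbound ((1 - s) - 1) hδ
    have hent : phiEnt (1 - s) ≤ s * Real.log s := by
      have h1s : (0:ℝ) < 1 - s := by linarith
      have : (1 - s) * Real.log (1 - s) ≤ 0 := by
        apply mul_nonpos_of_nonneg_of_nonpos h1s.le
        apply Real.log_nonpos h1s.le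
        linarith
      simp only [phiEnt]
      have heq : 1 - (1 - s) = s := by ring
      rw [heq]
      linarith
    have hneg : (1/(n:ℝ)) * phiEnt (1 - s) + μ * (((1 - s) - 1) * A + ((1 - s) - 1)^2 * B) < 0 := by
      have h1 : (1/(n:ℝ)) * phiEnt (1 - s) ≤ (1/(n:ℝ)) * (s * Real.log s) := by
        apply mul_le_mul_of_nonneg_left hent (by positivity)
      have h2 : (1/(n:ℝ)) * (s * Real.log s) + C * s = -(s/(n:ℝ)) := by
        rw [hlogs]; field_simp; ring
      have h3 : (0:ℝ) < s/(n:ℝ) := by positivity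
      linarith
    linarith

/-- The dual objective `D_K` has a unique minimizer over the cube `[0,1]^n`,
and this minimizer lies in the open cube `(0,1)^n`. -/
theorem dual_minimizer_exists_unique_interior
    {n : ℕ} (hn : 0 < n)
    (K : Matrix (Fin n) (Fin n) ℝ) (hK : K.PosSemidef)
    (y : Fin n → ℝ) (hy : ∀ i, y i = 1 ∨ y i = -1)
    (lam : ℝ) (hlam : 0 < lam) :
    ∃ c : Fin n → ℝ, (∀ i, c i ∈ Ioo (0:ℝ) 1) ∧
      IsMinOn (dualObj lam y K) {c' | ∀ i, c' i ∈ Icc (0:ℝ) 1} c ∧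
      ∀ c' : Fin n → ℝ, (∀ i, c' i ∈ Icc (0:ℝ) 1) →
        IsMinOn (dualObj lam y K) {c'' | ∀ i, c'' i ∈ Icc (0:ℝ) 1} c' → c' = c := by
  set S := {c' : Fin n → ℝ | ∀ i, c' i ∈ Icc (0:ℝ) 1} with hS
  have hSeq : S = Set.pi Set.univ (fun _ : Fin n => Icc (0:ℝ) 1) := by
    ext x; simp [hS, Set.mem_pi, Pi.le_def, forall_and]
  have hcompact : IsCompact S := by
    rw [hSeq]; exact isCompact_univ_pi fun _ => isCompact_Icc
  have hne : S.Nonempty := ⟨fun _ => 0, fun i => ⟨le_refl 0, zero_le_one⟩⟩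
  obtain ⟨c, hcS, hmin⟩ := hcompact.exists_isMinOn hne
    (dualObj_continuous lam y K).continuousOn
  refine ⟨c, fun i => min_interior hn K hK y lam hlam c hcS hmin i, hmin, ?_⟩
  intro c' hc'S hmin'
  exact (strictConvexOn_dualObj hn K hK y lam hlam).eq_of_isMinOn hmin' hmin hc'S hcS
end

section
/- Let G and M be symmetric positive semidefinite n×n matrices, and let c_G and c_M be the unique minimizers over [0,1]^n of D_G and D_M respectively. Then ‖c_G − c_M‖₂ ≤ ‖G − M‖_op / (4·λ·√n), where ‖·‖_op is the operator (spectral) norm. -/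
open Matrix Set

/-- Operator (spectral) norm of a real square matrix, i.e. the norm of the induced
continuous linear endomorphism of Euclidean space. -/
noncomputable def opNorm {n : ℕ} (A : Matrix (Fin n) (Fin n) ℝ) : ℝ :=
  ‖(Matrix.toEuclideanCLM (𝕜 := ℝ) A :
      EuclideanSpace ℝ (Fin n) →L[ℝ] EuclideanSpace ℝ (Fin n))‖

/-- Euclidean (ℓ²) norm of a vector. -/
noncomputable def e2norm {n : ℕ} (v : Fin n → ℝ) : ℝ := Real.sqrt (∑ i, (v i) ^ 2)

lemma phiEnt_eq_neg_binEntropy (c : ℝ) : phiEnt c = - Real.binEntropy c := by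
  simp [phiEnt, Real.binEntropy, Real.log_inv]; ring

lemma convexOn_phiEnt_sub : ConvexOn ℝ (Icc (0:ℝ) 1) (fun c => phiEnt c - 2*c^2) := by
  have hD : Convex ℝ (Icc (0:ℝ) 1) := convex_Icc 0 1
  have hint : interior (Icc (0:ℝ) 1) = Ioo 0 1 := interior_Icc
  apply convexOn_of_hasDerivWithinAt2_nonneg (f' := fun c => Real.log c - Real.log (1-c) - 4*c)
    (f'' := fun c => c⁻¹ + (1-c)⁻¹ - 4) hD
  · have : Continuous fun c : ℝ => phiEnt c - 2*c^2 := by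
      have := Real.binEntropy_continuous
      have h1 : (fun c : ℝ => phiEnt c - 2*c^2)
          = fun c : ℝ => - Real.binEntropy c - 2*c^2 := by
        funext c; rw [phiEnt_eq_neg_binEntropy]
      rw [h1]; fun_prop
    exact this.continuousOn
  · intro x hx
    rw [hint] at hx ⊢
    have h0 : x ≠ 0 := ne_of_gt hx.1
    have h1 : x ≠ 1 := ne_of_lt hx.2
    have hb := Real.hasDerivAt_binEntropy h0 h1
    have : HasDerivAt (fun c : ℝ => phiEnt c - 2*c^2)
        (Real.log x - Real.log (1-x) - 4*x) x := by
      have h2 : HasDerivAt (fun c : ℝ => 2*c^2) (4*x) x := by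
        have := (hasDerivAt_pow 2 x).const_mul (2:ℝ)
        simpa using this.congr_deriv (by ring)
      have h3 : HasDerivAt (fun c : ℝ => - Real.binEntropy c)
          (Real.log x - Real.log (1-x)) x := by
        exact hb.neg.congr_deriv (by ring)
      have h4 := h3.sub h2
      have h5 : (fun c : ℝ => - Real.binEntropy c - 2*c^2)
          = fun c : ℝ => phiEnt c - 2*c^2 := by
        funext c; rw [phiEnt_eq_neg_binEntropy]
      rw [← h5]; exact h4
    exact this.hasDerivWithinAt
  · intro x hx
    rw [hint] at hx ⊢
    have h0 : x ≠ 0 := ne_of_gt hx.1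
    have h1 : (1:ℝ) - x ≠ 0 := by linarith [hx.2]
    have : HasDerivAt (fun c : ℝ => Real.log c - Real.log (1-c) - 4*c)
        (x⁻¹ + (1-x)⁻¹ - 4) x := by
      have hl1 : HasDerivAt Real.log x⁻¹ x := Real.hasDerivAt_log h0
      have hl2' : HasDerivAt (fun c : ℝ => Real.log (1-c)) (-(1-x)⁻¹) x := by
        have hinner : HasDerivAt (fun c : ℝ => 1 - c) (-1) x := by
          simpa using (hasDerivAt_id x).const_sub 1
        have h := (Real.hasDerivAt_log h1).comp x hinner
        have : HasDerivAt (fun c : ℝ => Real.log (1-c)) ((1-x)⁻¹ * (-1)) x := h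
        simpa using this.congr_deriv (by ring)
      have h4 : HasDerivAt (fun c : ℝ => 4*c) 4 x := by
        simpa using (hasDerivAt_id x).const_mul (4:ℝ)
      have := (hl1.sub hl2').sub h4
      exact this.congr_deriv (by ring)
    exact this.hasDerivWithinAt
  · intro x hx
    rw [hint] at hx
    have h0 : 0 < x := hx.1
    have h1 : 0 < 1 - x := by linarith [hx.2]
    have key : x⁻¹ + (1-x)⁻¹ - 4 = (2*x-1)^2 / (x*(1-x)) := by field_simp; ring
    rw [key]
    positivity

lemma phiEnt_comb {a b t : ℝ} (ha : a ∈ Icc (0:ℝ) 1) (hb : b ∈ Icc (0:ℝ) 1)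
    (ht0 : 0 ≤ t) (ht1 : t ≤ 1) :
    phiEnt (t*a + (1-t)*b) ≤ t * phiEnt a + (1-t) * phiEnt b - 2*t*(1-t)*(a-b)^2 := by
  have := convexOn_phiEnt_sub.2 ha hb ht0 (by linarith : (0:ℝ) ≤ 1 - t) (by ring)
  simp only [smul_eq_mul] at this
  nlinarith [this]

lemma quad_comb {n : ℕ} (K : Matrix (Fin n) (Fin n) ℝ) (u v : Fin n → ℝ) (t : ℝ) :
    ((fun i => t * u i + (1-t) * v i) ⬝ᵥ (K *ᵥ fun i => t * u i + (1-t) * v i))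
      = t * (u ⬝ᵥ (K *ᵥ u)) + (1-t) * (v ⬝ᵥ (K *ᵥ v))
        - t*(1-t) * ((u - v) ⬝ᵥ (K *ᵥ (u - v))) := by
  have hv : (fun i => t * u i + (1-t) * v i) = t • u + (1 - t) • v := by
    funext i; simp [smul_eq_mul]
  rw [hv]
  simp only [Matrix.mulVec_add, Matrix.mulVec_smul, Matrix.mulVec_sub,
    dotProduct_add, add_dotProduct, dotProduct_smul, smul_dotProduct,
    dotProduct_sub, sub_dotProduct, smul_eq_mul]
  ring

lemma dualObj_comb {n : ℕ} (hn : 0 < n) {lam : ℝ} (hlam : 0 < lam)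
    (y : Fin n → ℝ) (K : Matrix (Fin n) (Fin n) ℝ) (hK : K.PosSemidef)
    {c1 c2 : Fin n → ℝ} (h1 : ∀ i, c1 i ∈ Icc (0:ℝ) 1) (h2 : ∀ i, c2 i ∈ Icc (0:ℝ) 1)
    {t : ℝ} (ht0 : 0 ≤ t) (ht1 : t ≤ 1) :
    dualObj lam y K (fun i => t * c1 i + (1-t) * c2 i)
      ≤ t * dualObj lam y K c1 + (1-t) * dualObj lam y K c2
        - (2/n) * (t*(1-t)) * ∑ i, (c1 i - c2 i)^2 := by
  have hn' : (0:ℝ) < n := by exact_mod_cast hn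
  have hφ : ∑ i, phiEnt (t * c1 i + (1-t) * c2 i)
      ≤ t * ∑ i, phiEnt (c1 i) + (1-t) * ∑ i, phiEnt (c2 i)
        - 2*t*(1-t) * ∑ i, (c1 i - c2 i)^2 := by
    have := Finset.sum_le_sum (fun i (_ : i ∈ Finset.univ) =>
      phiEnt_comb (h1 i) (h2 i) ht0 ht1)
    simpa [Finset.sum_add_distrib, Finset.sum_sub_distrib, Finset.mul_sum,
      mul_assoc] using this
  have hvp : (fun i => y i * (t * c1 i + (1-t) * c2 i))
      = fun i => t * (y i * c1 i) + (1-t) * (y i * c2 i) := by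
    funext i; ring
  have hq := quad_comb K (fun i => y i * c1 i) (fun i => y i * c2 i) t
  have hpos : 0 ≤ (((fun i => y i * c1 i) - fun i => y i * c2 i) ⬝ᵥ
      (K *ᵥ ((fun i => y i * c1 i) - fun i => y i * c2 i))) := by
    have := hK.dotProduct_mulVec_nonneg ((fun i => y i * c1 i) - fun i => y i * c2 i)
    simpa using this
  have hC : 0 < 1 / (2 * lam * (n:ℝ)^2) := by positivity
  have htt : 0 ≤ t * (1-t) := mul_nonneg ht0 (by linarith)
  simp only [dualObj, hvp]
  rw [hq]
  set Sp := ∑ i, phiEnt (t * c1 i + (1-t) * c2 i) with hSp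
  set S1 := ∑ i, phiEnt (c1 i) with hS1
  set S2 := ∑ i, phiEnt (c2 i) with hS2
  set Sd := ∑ i, (c1 i - c2 i)^2 with hSd
  set Q1 := (fun i => y i * c1 i) ⬝ᵥ (K *ᵥ fun i => y i * c1 i) with hQ1
  set Q2 := (fun i => y i * c2 i) ⬝ᵥ (K *ᵥ fun i => y i * c2 i) with hQ2
  set Qd := ((fun i => y i * c1 i) - fun i => y i * c2 i) ⬝ᵥ
      (K *ᵥ ((fun i => y i * c1 i) - fun i => y i * c2 i)) with hQd
  set C := 1 / (2 * lam * (n:ℝ)^2) with hCdef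
  have hA : (1/(n:ℝ)) * Sp ≤ (1/(n:ℝ)) * (t * S1 + (1-t) * S2 - 2*t*(1-t) * Sd) :=
    mul_le_mul_of_nonneg_left hφ (by positivity)
  have hB : 0 ≤ C * (t*(1-t) * Qd) := mul_nonneg hC.le (mul_nonneg htt hpos)
  have hgoal : (1/(n:ℝ)) * Sp + C * ((t * Q1 + (1-t) * Q2) - t*(1-t) * Qd)
      ≤ t * ((1/(n:ℝ)) * S1 + C * Q1) + (1-t) * ((1/(n:ℝ)) * S2 + C * Q2)
        - (2/(n:ℝ)) * (t*(1-t)) * Sd := by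
    have e1 : (2/(n:ℝ)) * (t*(1-t)) * Sd = (1/(n:ℝ)) * (2*t*(1-t)*Sd) := by ring
    nlinarith [hA, hB]
  exact hgoal

lemma isMinOn_strong {n : ℕ} (hn : 0 < n) {lam : ℝ} (hlam : 0 < lam)
    (y : Fin n → ℝ) (K : Matrix (Fin n) (Fin n) ℝ) (hK : K.PosSemidef)
    {cs c : Fin n → ℝ} (hcs : ∀ i, cs i ∈ Icc (0:ℝ) 1)
    (hmin : IsMinOn (dualObj lam y K) {c | ∀ i, c i ∈ Icc (0:ℝ) 1} cs)
    (hc : ∀ i, c i ∈ Icc (0:ℝ) 1) :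
    dualObj lam y K cs + (2/n) * ∑ i, (c i - cs i)^2 ≤ dualObj lam y K c := by
  set S := ∑ i, (c i - cs i)^2 with hS
  have hS0 : 0 ≤ S := Finset.sum_nonneg fun i _ => sq_nonneg _
  have key : ∀ t ∈ Ioo (0:ℝ) 1,
      dualObj lam y K cs + (2/n) * (1-t) * S ≤ dualObj lam y K c := by
    intro t ht
    have hp : (fun i => t * c i + (1-t) * cs i) ∈ {c : Fin n → ℝ | ∀ i, c i ∈ Icc (0:ℝ) 1} := by
      intro i
      have h1t : (0:ℝ) ≤ 1 - t := by linarith [ht.2]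
      have := (convex_Icc (0:ℝ) 1) (hc i) (hcs i) ht.1.le h1t (by ring)
      simpa [smul_eq_mul] using this
    have hmp : dualObj lam y K cs ≤ dualObj lam y K (fun i => t * c i + (1-t) * cs i) :=
      isMinOn_iff.mp hmin _ hp
    have hcomb := dualObj_comb hn hlam y K hK hc hcs ht.1.le ht.2.le
    have ht0 : 0 < t := ht.1
    rw [← mul_le_mul_iff_of_pos_left ht0]
    nlinarith [hmp, hcomb]
  have hlim : Filter.Tendsto (fun t : ℝ => dualObj lam y K cs + (2/n) * (1-t) * S)
      (nhdsWithin 0 (Ioi 0)) (nhds (dualObj lam y K cs + (2/n) * (1-(0:ℝ)) * S)) := by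
    apply Filter.Tendsto.mono_left _ nhdsWithin_le_nhds
    exact (Continuous.tendsto (by continuity) 0)
  have hmem : Ioo (0:ℝ) 1 ∈ nhdsWithin (0:ℝ) (Ioi 0) :=
    Ioo_mem_nhdsGT (by norm_num)
  have := le_of_tendsto hlim (Filter.eventually_of_mem hmem (fun t ht => key t ht))
  simpa using this

lemma e2norm_nonneg {n : ℕ} (v : Fin n → ℝ) : 0 ≤ e2norm v := Real.sqrt_nonneg _

lemma dot_mulVec_le {n : ℕ} (A : Matrix (Fin n) (Fin n) ℝ) (w z : Fin n → ℝ) :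
    w ⬝ᵥ (A *ᵥ z) ≤ opNorm A * (e2norm w * e2norm z) := by
  set W : EuclideanSpace ℝ (Fin n) := (WithLp.equiv 2 (Fin n → ℝ)).symm w with hW
  set Z : EuclideanSpace ℝ (Fin n) := (WithLp.equiv 2 (Fin n → ℝ)).symm z with hZ
  have hWn : ‖W‖ = e2norm w := by
    rw [EuclideanSpace.norm_eq, e2norm]
    congr 1
    refine Finset.sum_congr rfl fun i _ => ?_
    simp [hW, Real.norm_eq_abs, sq_abs]
  have hZn : ‖Z‖ = e2norm z := by
    rw [EuclideanSpace.norm_eq, e2norm]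
    congr 1
    refine Finset.sum_congr rfl fun i _ => ?_
    simp [hZ, Real.norm_eq_abs, sq_abs]
  have hinner : (inner ℝ W ((Matrix.toEuclideanCLM (𝕜 := ℝ) A) Z) : ℝ) = w ⬝ᵥ (A *ᵥ z) := by
    rw [hZ, WithLp.equiv_symm_apply, Matrix.toEuclideanCLM_toLp]
    simp [hW, PiLp.inner_apply, RCLike.inner_apply, Matrix.toLin'_apply, dotProduct, mul_comm]
  calc w ⬝ᵥ (A *ᵥ z) = inner ℝ W ((Matrix.toEuclideanCLM (𝕜 := ℝ) A) Z) := hinner.symm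
    _ ≤ ‖W‖ * ‖(Matrix.toEuclideanCLM (𝕜 := ℝ) A) Z‖ := real_inner_le_norm _ _
    _ ≤ ‖W‖ * (‖(Matrix.toEuclideanCLM (𝕜 := ℝ) A :
          EuclideanSpace ℝ (Fin n) →L[ℝ] EuclideanSpace ℝ (Fin n))‖ * ‖Z‖) :=
        mul_le_mul_of_nonneg_left (ContinuousLinearMap.le_opNorm _ Z) (norm_nonneg W)
    _ = opNorm A * (e2norm w * e2norm z) := by rw [hWn, hZn, opNorm]; ring

/-- Stability of the dual minimizers: if `c_G`, `c_M` are the minimizers over `[0,1]^n`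
of `D_G`, `D_M` respectively, then `‖c_G − c_M‖₂ ≤ ‖G − M‖_op / (4λ√n)`. -/
theorem dual_minimizer_stability
    {n : ℕ} (hn : 0 < n)
    (y : Fin n → ℝ) (hy : ∀ i, y i = 1 ∨ y i = -1)
    (lam : ℝ) (hlam : 0 < lam)
    (G M : Matrix (Fin n) (Fin n) ℝ) (hG : G.PosSemidef) (hM : M.PosSemidef)
    (cG cM : Fin n → ℝ)
    (hcG : (∀ i, cG i ∈ Icc (0:ℝ) 1) ∧
      IsMinOn (dualObj lam y G) {c | ∀ i, c i ∈ Icc (0:ℝ) 1} cG)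
    (hcM : (∀ i, cM i ∈ Icc (0:ℝ) 1) ∧
      IsMinOn (dualObj lam y M) {c | ∀ i, c i ∈ Icc (0:ℝ) 1} cM) :
    e2norm (cG - cM) ≤ opNorm (G - M) / (4 * lam * Real.sqrt n) := by
  obtain ⟨hcGmem, hcGmin⟩ := hcG
  obtain ⟨hcMmem, hcMmin⟩ := hcM
  have hn' : (0:ℝ) < n := by exact_mod_cast hn
  have hy2 : ∀ i, (y i)^2 = 1 := by
    intro i; rcases hy i with h | h <;> rw [h] <;> norm_num
  set S := ∑ i, (cG i - cM i)^2 with hSdef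
  have hS0 : 0 ≤ S := Finset.sum_nonneg fun i _ => sq_nonneg _
  set vG := fun i => y i * cG i with hvG
  set vM := fun i => y i * cM i with hvM
  set Δ := G - M with hΔ
  set P := opNorm Δ with hP
  have hP0 : 0 ≤ P := norm_nonneg _
  have hden : (0:ℝ) < 4 * lam * Real.sqrt n := by positivity
  -- the two strong-minimality inequalities
  have hG1 : dualObj lam y G cG + (2/n) * ∑ i, (cM i - cG i)^2 ≤ dualObj lam y G cM :=
    isMinOn_strong hn hlam y G hG hcGmem hcGmin hcMmem
  have hM1 : dualObj lam y M cM + (2/n) * ∑ i, (cG i - cM i)^2 ≤ dualObj lam y M cG :=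
    isMinOn_strong hn hlam y M hM hcMmem hcMmin hcGmem
  have hflip : ∑ i, (cM i - cG i)^2 = S := by
    rw [hSdef]; exact Finset.sum_congr rfl fun i _ => by ring
  rw [hflip] at hG1
  -- difference of objectives
  set C := 1 / (2 * lam * (n:ℝ)^2) with hC
  have hC0 : 0 < C := by rw [hC]; positivity
  have hdiff : ∀ c : Fin n → ℝ, dualObj lam y G c - dualObj lam y M c
      = C * ((fun i => y i * c i) ⬝ᵥ (Δ *ᵥ fun i => y i * c i)) := by
    intro c
    simp only [dualObj, hΔ, Matrix.sub_mulVec, dotProduct_sub, hC]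
    ring
  have hquad : (4/n) * S ≤ C * ((vM ⬝ᵥ (Δ *ᵥ vM)) - (vG ⬝ᵥ (Δ *ᵥ vG))) := by
    have h1 := hdiff cM
    have h2 := hdiff cG
    rw [← hvM] at h1
    rw [← hvG] at h2
    have : (2/n) * S + (2/n) * S ≤ (dualObj lam y G cM - dualObj lam y M cM)
        + (dualObj lam y M cG - dualObj lam y G cG) := by linarith
    rw [h1] at this
    have h3 : dualObj lam y M cG - dualObj lam y G cG
        = - (C * (vG ⬝ᵥ (Δ *ᵥ vG))) := by linarith
    rw [h3] at this
    rw [mul_sub]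
    have h4 : (4:ℝ)/n * S = 2/n * S + 2/n * S := by ring
    linarith
  -- symmetry of Δ
  have hΔsymm : Δᵀ = Δ := by
    have h := (hG.1.sub hM.1).eq
    rw [hΔ]
    rw [← Matrix.conjTranspose_eq_transpose_of_trivial]
    exact h
  have hsymm : ∀ u w : Fin n → ℝ, u ⬝ᵥ (Δ *ᵥ w) = w ⬝ᵥ (Δ *ᵥ u) := by
    intro u w
    rw [Matrix.dotProduct_mulVec, ← Matrix.mulVec_transpose, hΔsymm, dotProduct_comm]
  have hfactor : (vM ⬝ᵥ (Δ *ᵥ vM)) - (vG ⬝ᵥ (Δ *ᵥ vG))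
      = (vM - vG) ⬝ᵥ (Δ *ᵥ (vM + vG)) := by
    have h := hsymm vM vG
    simp only [Matrix.mulVec_add, dotProduct_add, sub_dotProduct]
    linarith
  -- norm bounds
  have hnormw : e2norm (vM - vG) = e2norm (cG - cM) := by
    unfold e2norm
    congr 1
    refine Finset.sum_congr rfl fun i _ => ?_
    have := hy2 i
    simp only [Pi.sub_apply, hvM, hvG]
    nlinarith [hy2 i]
  have hnormz : e2norm (vM + vG) ≤ 2 * Real.sqrt n := by
    unfold e2norm
    have hb : ∑ i, ((vM + vG) i)^2 ≤ ∑ i : Fin n, (4:ℝ) := by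
      refine Finset.sum_le_sum fun i _ => ?_
      have h1 := hcMmem i
      have h2 := hcGmem i
      simp only [Pi.add_apply, hvM, hvG]
      have : (y i * cM i + y i * cG i)^2 = (cM i + cG i)^2 * (y i)^2 := by ring
      rw [this, hy2 i, mul_one]
      nlinarith [h1.1, h1.2, h2.1, h2.2]
    have hb2 : ∑ i : Fin n, (4:ℝ) = 4 * n := by
      simp [Finset.sum_const, mul_comm]
    calc Real.sqrt (∑ i, ((vM + vG) i)^2) ≤ Real.sqrt (4 * n) := by
          apply Real.sqrt_le_sqrt; rw [← hb2]; exact hb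
      _ = 2 * Real.sqrt n := by
          rw [show (4:ℝ) * n = (2*Real.sqrt n)^2 by
            rw [mul_pow, Real.sq_sqrt hn'.le]; ring]
          rw [Real.sqrt_sq (by positivity)]
  set s := e2norm (cG - cM) with hs
  have hs0 : 0 ≤ s := e2norm_nonneg _
  have hssq : s^2 = S := by
    rw [hs]
    unfold e2norm
    rw [Real.sq_sqrt (Finset.sum_nonneg fun i _ => sq_nonneg _)]
    exact Finset.sum_congr rfl fun i _ => by simp
  -- main chain
  have hdot : (vM - vG) ⬝ᵥ (Δ *ᵥ (vM + vG)) ≤ P * (s * (2 * Real.sqrt n)) := by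
    calc (vM - vG) ⬝ᵥ (Δ *ᵥ (vM + vG))
        ≤ opNorm Δ * (e2norm (vM - vG) * e2norm (vM + vG)) := dot_mulVec_le Δ _ _
      _ ≤ P * (s * (2 * Real.sqrt n)) := by
          rw [hnormw, ← hP]
          exact mul_le_mul_of_nonneg_left
            (mul_le_mul_of_nonneg_left hnormz hs0) hP0
  have hmain : (4/n) * s^2 ≤ C * (P * (s * (2 * Real.sqrt n))) := by
    rw [hssq]
    calc (4/n) * S ≤ C * ((vM ⬝ᵥ (Δ *ᵥ vM)) - (vG ⬝ᵥ (Δ *ᵥ vG))) := hquad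
      _ = C * ((vM - vG) ⬝ᵥ (Δ *ᵥ (vM + vG))) := by rw [hfactor]
      _ ≤ C * (P * (s * (2 * Real.sqrt n))) := mul_le_mul_of_nonneg_left hdot hC0.le
  rcases eq_or_lt_of_le hs0 with hz | hz
  · rw [← hz]
    positivity
  · rw [le_div_iff₀ hden]
    have hsq : Real.sqrt n * Real.sqrt n = (n:ℝ) := Real.mul_self_sqrt hn'.le
    have hm : 0 < 2 * s * Real.sqrt n * (n:ℝ) := by positivity
    apply le_of_mul_le_mul_right _ hm
    have e1 : s * (4 * lam * Real.sqrt n) * (2 * s * Real.sqrt n * n)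
        = 4 * s^2 * (2 * lam * (n:ℝ)^2) := by
      linear_combination (8 * lam * (n:ℝ) * s^2) * hsq
    have e2 : P * (2 * s * Real.sqrt n * n) = (C * (P * (s * (2 * Real.sqrt n)))) * ((n:ℝ) * (2 * lam * (n:ℝ)^2)) := by
      rw [hC]
      field_simp
    have e3 : (4/n) * s^2 * ((n:ℝ) * (2 * lam * (n:ℝ)^2)) = 4 * s^2 * (2 * lam * (n:ℝ)^2) := by
      field_simp
    rw [e1, e2, ← e3]
    have hpos2 : (0:ℝ) ≤ (n:ℝ) * (2 * lam * (n:ℝ)^2) := by positivity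
    exact mul_le_mul_of_nonneg_right hmain hpos2
end

section
/- For every A ∈ ℝ^{n×n}, z ∈ ℝ^n, and u, v ∈ ℝ^r: (Pu)ᵀ A (Pv) = n²·uᵀ Q Ā Q v and zᵀ P u = n·z̄ᵀ Q u, where Ā_{bc} = (1/(n_b n_c))·∑_{i: τ(i)=b} ∑_{j: τ(j)=c} A_{ij} and z̄_b = (1/n_b)·∑_{i: τ(i)=b} z_i. Moreover, let N ∈ ℝ^{r×r} be symmetric positive semidefinite, θ ∈ (0,1)^r, ε ∈ {−1,+1}^r, y_i = ε_{τ(i)}, Y = diag(y), Y_r = diag(ε), M = P N Pᵀ, and J = (1/n)·diag(φ''(θ_{τ(1)}), …, φ''(θ_{τ(n)})) + (1/(λn²))·Y M Y. Then the block-constant subspace {Pu : u ∈ ℝ^r} and its orthogonal complement are both invariant under J, J(Pu) = (1/n)·P·A_λ·u where A_λ = diag(φ''(θ_1), …, φ''(θ_r)) + (1/λ)·Y_r N Q Y_r, the matrix A_λ is invertible, and J^{−1}(Pz') = n·P·A_λ^{−1}·z' for every z' ∈ ℝ^r. -/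
open Matrix Set Finset

/-- Second derivative of the binary entropy potential on `(0,1)`:
`φ''(c) = 1/c + 1/(1−c)`. -/
noncomputable def phiEnt'' (c : ℝ) : ℝ := 1 / c + 1 / (1 - c)

/-- Size of the template block `b` under the assignment `τ`. -/
def blockSize {n r : ℕ} (τ : Fin n → Fin r) (b : Fin r) : ℕ :=
  (univ.filter (fun i => τ i = b)).card

/-- Color-pair block averages `Ā_{bc} = (1/(n_b n_c))·∑_{τ(i)=b} ∑_{τ(j)=c} A_{ij}`. -/
noncomputable def blockAvgM {n r : ℕ} (τ : Fin n → Fin r)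
    (A : Matrix (Fin n) (Fin n) ℝ) : Matrix (Fin r) (Fin r) ℝ :=
  Matrix.of fun b c =>
    (1 / ((blockSize τ b : ℝ) * (blockSize τ c : ℝ))) *
      ∑ i ∈ univ.filter (fun i => τ i = b), ∑ j ∈ univ.filter (fun j => τ j = c), A i j

/-- Block averages `z̄_b = (1/n_b)·∑_{τ(i)=b} z_i` of a vector. -/
noncomputable def blockAvgV {n r : ℕ} (τ : Fin n → Fin r) (z : Fin n → ℝ) :
    Fin r → ℝ :=
  fun b => (1 / (blockSize τ b : ℝ)) * ∑ i ∈ univ.filter (fun i => τ i = b), z i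

/-- A nonnegative scalar multiple of a real PSD matrix is PSD. -/
lemma psd_smul_aux {m : Type*} [Fintype m] {A : Matrix m m ℝ} (hA : A.PosSemidef)
    {c : ℝ} (hc : 0 ≤ c) : (c • A).PosSemidef := by
  refine ⟨?_, fun x => ?_⟩
  · unfold Matrix.IsHermitian
    rw [conjTranspose_smul, hA.1]
    simp
  · exact (hA.smul hc).2 x

/-- Block-average bilinear identities and the block reduction of the ideal dual
Hessian `J`: the block-constant subspace `{Pu}` and its orthogonal complement are
invariant under `J`, `J(Pu) = (1/n)·P·A_λ·u`, the matrix `A_λ` is invertible, and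
`J⁻¹(Pz') = n·P·A_λ⁻¹·z'`. -/
theorem block_projection_hessian
    {n r : ℕ} (hn : 0 < n) (hr : 0 < r) (lam : ℝ) (hlam : 0 < lam)
    (τ : Fin n → Fin r) (hτ : Function.Surjective τ)
    (P : Matrix (Fin n) (Fin r) ℝ)
    (hP : ∀ i b, P i b = if τ i = b then 1 else 0)
    (phat : Fin r → ℝ) (hphat : ∀ b, phat b = (blockSize τ b : ℝ) / n)
    (Q : Matrix (Fin r) (Fin r) ℝ) (hQ : Q = Matrix.diagonal phat)
    (N : Matrix (Fin r) (Fin r) ℝ) (hN : N.PosSemidef)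
    (θ : Fin r → ℝ) (hθ : ∀ b, θ b ∈ Ioo (0:ℝ) 1)
    (ε : Fin r → ℝ) (hε : ∀ a, ε a = 1 ∨ ε a = -1)
    (y : Fin n → ℝ) (hy : ∀ i, y i = ε (τ i))
    (Y : Matrix (Fin n) (Fin n) ℝ) (hY : Y = Matrix.diagonal y)
    (Yr : Matrix (Fin r) (Fin r) ℝ) (hYr : Yr = Matrix.diagonal ε)
    (M : Matrix (Fin n) (Fin n) ℝ) (hM : M = P * N * Pᵀ)
    (J : Matrix (Fin n) (Fin n) ℝ)
    (hJ : J = ((1 : ℝ) / n) • Matrix.diagonal (fun i => phiEnt'' (θ (τ i))) +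
      (1 / (lam * (n : ℝ) ^ 2)) • (Y * M * Y))
    (Alam : Matrix (Fin r) (Fin r) ℝ)
    (hAlam : Alam = Matrix.diagonal (fun b => phiEnt'' (θ b)) +
      (1 / lam) • (Yr * N * Q * Yr)) :
    (∀ (A : Matrix (Fin n) (Fin n) ℝ) (z : Fin n → ℝ) (u v : Fin r → ℝ),
      (P *ᵥ u) ⬝ᵥ (A *ᵥ (P *ᵥ v)) =
        (n : ℝ) ^ 2 * (u ⬝ᵥ (Q *ᵥ (blockAvgM τ A *ᵥ (Q *ᵥ v)))) ∧
      z ⬝ᵥ (P *ᵥ u) = (n : ℝ) * (blockAvgV τ z ⬝ᵥ (Q *ᵥ u))) ∧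
    (∀ u : Fin r → ℝ, ∃ w : Fin r → ℝ, J *ᵥ (P *ᵥ u) = P *ᵥ w) ∧
    (∀ x : Fin n → ℝ, (∀ u : Fin r → ℝ, x ⬝ᵥ (P *ᵥ u) = 0) →
      ∀ u : Fin r → ℝ, (J *ᵥ x) ⬝ᵥ (P *ᵥ u) = 0) ∧
    (∀ u : Fin r → ℝ, J *ᵥ (P *ᵥ u) = ((1 : ℝ) / n) • (P *ᵥ (Alam *ᵥ u))) ∧
    IsUnit Alam.det ∧
    (∀ z' : Fin r → ℝ, J⁻¹ *ᵥ (P *ᵥ z') = (n : ℝ) • (P *ᵥ (Alam⁻¹ *ᵥ z'))) := by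
  have hn' : (n : ℝ) ≠ 0 := Nat.cast_ne_zero.mpr hn.ne'
  have hnpos : (0 : ℝ) < n := by exact_mod_cast hn
  have hnb : ∀ b : Fin r, (0 : ℝ) < (blockSize τ b : ℝ) := by
    intro b
    obtain ⟨i, hi⟩ := hτ b
    have : 0 < blockSize τ b := Finset.card_pos.mpr ⟨i, by simp [hi]⟩
    exact_mod_cast this
  have hphatpos : ∀ b, 0 < phat b := fun b => by
    rw [hphat b]; exact div_pos (hnb b) hnpos
  have hphi : ∀ b, 0 < phiEnt'' (θ b) := by
    intro b
    obtain ⟨h1, h2⟩ := hθ b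
    have h3 : (0 : ℝ) < 1 - θ b := by linarith
    unfold phiEnt''
    positivity
  have hPu : ∀ (u : Fin r → ℝ) (i), (P *ᵥ u) i = u (τ i) := by
    intro u i
    simp [mulVec, dotProduct, hP, ite_mul]
  have hPu' : ∀ w : Fin r → ℝ, P *ᵥ w = fun i => w (τ i) := fun w => funext (hPu w)
  have hPt : ∀ (w : Fin n → ℝ) (b), (Pᵀ *ᵥ w) b =
      ∑ i ∈ univ.filter (fun i => τ i = b), w i := by
    intro w b
    rw [Finset.sum_filter]
    simp [mulVec, dotProduct, transpose_apply, hP, ite_mul]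
  -- key pointwise identity
  have hJP : ∀ u : Fin r → ℝ, J *ᵥ (P *ᵥ u) = ((1 : ℝ) / n) • (P *ᵥ (Alam *ᵥ u)) := by
    intro u
    have h1 : Y *ᵥ (P *ᵥ u) = fun i => ε (τ i) * u (τ i) := by
      ext i; rw [hY, mulVec_diagonal, hy, hPu]
    have h2 : Pᵀ *ᵥ (fun i => ε (τ i) * u (τ i)) =
        fun b => (blockSize τ b : ℝ) * (ε b * u b) := by
      ext b
      rw [hPt]
      rw [Finset.sum_congr rfl (g := fun _ => ε b * u b)
        (fun i hi => by simp only [mem_filter] at hi; rw [hi.2])]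
      rw [Finset.sum_const, nsmul_eq_mul]
      rfl
    have hLHS : ∀ i, (J *ᵥ (P *ᵥ u)) i =
        (1 / (n : ℝ)) * (phiEnt'' (θ (τ i)) * u (τ i)) +
        (1 / (lam * (n : ℝ) ^ 2)) *
          (ε (τ i) * ∑ b, N (τ i) b * ((blockSize τ b : ℝ) * (ε b * u b))) := by
      intro i
      have hd : (Y * M * Y) *ᵥ (P *ᵥ u) =
          Y *ᵥ (P *ᵥ (N *ᵥ (Pᵀ *ᵥ (Y *ᵥ (P *ᵥ u))))) := by
        rw [hM]; simp only [← mulVec_mulVec]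
      rw [hJ, add_mulVec, Pi.add_apply, smul_mulVec, smul_mulVec,
        Pi.smul_apply, Pi.smul_apply, mulVec_diagonal, hPu, hd, h1, h2,
        hY, mulVec_diagonal, hy, hPu]
      simp only [smul_eq_mul, mulVec, dotProduct]
    have hRHS : ∀ i, (((1 : ℝ) / n) • (P *ᵥ (Alam *ᵥ u))) i =
        (1 / (n : ℝ)) * (phiEnt'' (θ (τ i)) * u (τ i) +
          (1 / lam) * (ε (τ i) * ∑ b, N (τ i) b * (phat b * (ε b * u b)))) := by
      intro i
      have hd : (Yr * N * Q * Yr) *ᵥ u = Yr *ᵥ (N *ᵥ (Q *ᵥ (Yr *ᵥ u))) := by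
        simp only [← mulVec_mulVec]
      rw [Pi.smul_apply, hPu, hAlam, add_mulVec, Pi.add_apply, mulVec_diagonal,
        smul_mulVec, Pi.smul_apply, hd, hYr, mulVec_diagonal]
      have hQv : Q *ᵥ ((fun b => ε b * u b) : Fin r → ℝ) =
          fun b => phat b * (ε b * u b) := by
        ext b; rw [hQ, mulVec_diagonal]
      have hYru : (Matrix.diagonal ε) *ᵥ u = fun b => ε b * u b := by
        ext b; rw [mulVec_diagonal]
      rw [hYru, hQv]
      simp only [smul_eq_mul, mulVec, dotProduct]
    ext i
    rw [hLHS, hRHS]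
    have hsum : ∑ b, N (τ i) b * (phat b * (ε b * u b)) =
        (1 / (n : ℝ)) * ∑ b, N (τ i) b * ((blockSize τ b : ℝ) * (ε b * u b)) := by
      rw [Finset.mul_sum]
      refine Finset.sum_congr rfl fun b _ => ?_
      rw [hphat]
      ring
    rw [hsum]
    field_simp
  -- symmetry facts
  have hNsym : Nᵀ = N := by
    ext a b
    have := congrFun (congrFun hN.1 a) b
    simpa [conjTranspose_apply] using this
  have hJsym : Jᵀ = J := by
    rw [hJ, hM, hY]
    simp [transpose_add, transpose_smul, transpose_mul, diagonal_transpose,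
      transpose_transpose, hNsym, Matrix.mul_assoc]
  -- positive definiteness of Q * Alam
  have hfe : (fun i => phat i * ε i) = fun i => ε i * phat i := funext fun b => mul_comm _ _
  have hcomm : Q * Yr = Yr * Q := by
    rw [hQ, hYr, diagonal_mul_diagonal, diagonal_mul_diagonal, hfe]
  have hQYrH : (Q * Yr)ᴴ = Yr * Q := by
    rw [hQ, hYr, diagonal_mul_diagonal, diagonal_mul_diagonal, diagonal_conjTranspose]
    rw [show (star fun i => phat i * ε i) = fun i => ε i * phat i from
      funext fun b => by simp [mul_comm]]
  have hQAlam : Q * Alam = Matrix.diagonal (fun b => phat b * phiEnt'' (θ b)) +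
      (1 / lam) • ((Q * Yr) * N * (Q * Yr)ᴴ) := by
    rw [hAlam, Matrix.mul_add, Matrix.mul_smul, hQYrH]
    have e1 : Q * Matrix.diagonal (fun b => phiEnt'' (θ b)) =
        Matrix.diagonal (fun b => phat b * phiEnt'' (θ b)) := by
      rw [hQ, diagonal_mul_diagonal]
    have e2 : Q * (Yr * N * Q * Yr) = Q * Yr * N * (Yr * Q) := by
      simp only [Matrix.mul_assoc]
      rw [hcomm]
    rw [e1, e2]
  have hQA_pd : (Q * Alam).PosDef := by
    rw [hQAlam]
    exact (Matrix.PosDef.diagonal fun b => mul_pos (hphatpos b) (hphi b)).add_posSemidef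
      (psd_smul_aux (hN.mul_mul_conjTranspose_same (Q * Yr)) (by positivity))
  have hAdet : IsUnit Alam.det := by
    have h1 : (Q * Alam).det ≠ 0 := hQA_pd.det_pos.ne'
    rw [Matrix.det_mul] at h1
    exact isUnit_iff_ne_zero.mpr (right_ne_zero_of_mul h1)
  -- positive definiteness of J
  have hPH : Pᴴ = Pᵀ := by
    ext b i
    simp [conjTranspose_apply]
  have hYH : Yᴴ = Y := by
    rw [hY, diagonal_conjTranspose]
    rw [show (star y) = y from funext fun i => by simp]
  have hJpd : J.PosDef := by
    rw [hJ]
    have hd : (((1 : ℝ) / n) • Matrix.diagonal (fun i => phiEnt'' (θ (τ i)))).PosDef := by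
      rw [← diagonal_smul]
      refine Matrix.PosDef.diagonal fun i => ?_
      have h1 := hphi (τ i)
      have h1n : (0 : ℝ) < 1 / (n : ℝ) := by positivity
      simpa using mul_pos h1n h1
    refine hd.add_posSemidef (psd_smul_aux ?_ (by positivity))
    rw [hM]
    have h1 : (P * N * Pᵀ).PosSemidef := by
      rw [← hPH]; exact hN.mul_mul_conjTranspose_same P
    have h2 := h1.mul_mul_conjTranspose_same Y
    rwa [hYH] at h2
  have hJdet : IsUnit J.det := isUnit_iff_ne_zero.mpr hJpd.det_pos.ne'
  refine ⟨?_, ?_, ?_, hJP, hAdet, ?_⟩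
  · -- bilinear identities
    intro A z u v
    have hQv : ∀ (w : Fin r → ℝ) (c), (Q *ᵥ w) c = phat c * w c := by
      intro w c; rw [hQ, mulVec_diagonal]
    constructor
    · have e1 : ∀ i, (A *ᵥ (P *ᵥ v)) i = ∑ j, A i j * v (τ j) := by
        intro i; rw [hPu' v]; simp [mulVec, dotProduct]
      have hL : (P *ᵥ u) ⬝ᵥ (A *ᵥ (P *ᵥ v)) =
          ∑ b, ∑ c, (u b * v c) *
            (∑ i ∈ univ.filter (fun i => τ i = b),
              ∑ j ∈ univ.filter (fun j => τ j = c), A i j) := by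
        have step0 : (P *ᵥ u) ⬝ᵥ (A *ᵥ (P *ᵥ v)) =
            ∑ i, ∑ j, u (τ i) * (A i j * v (τ j)) := by
          simp only [dotProduct, e1, hPu, Finset.mul_sum]
        rw [step0,
          ← Finset.sum_fiberwise univ τ (fun i => ∑ j, u (τ i) * (A i j * v (τ j)))]
        refine Finset.sum_congr rfl fun b _ => ?_
        rw [Finset.sum_congr rfl (fun i _ =>
          (Finset.sum_fiberwise univ τ (fun j => u (τ i) * (A i j * v (τ j)))).symm)]
        rw [Finset.sum_comm]
        refine Finset.sum_congr rfl fun c _ => ?_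
        rw [Finset.mul_sum]
        refine Finset.sum_congr rfl fun i hi => ?_
        rw [Finset.mul_sum]
        refine Finset.sum_congr rfl fun j hj => ?_
        simp only [mem_filter] at hi hj
        rw [hi.2, hj.2]
        ring
      rw [hL]
      have hQv' : ∀ w : Fin r → ℝ, Q *ᵥ w = fun c => phat c * w c :=
        fun w => funext (hQv w)
      have e2 : ∀ b, (blockAvgM τ A *ᵥ (Q *ᵥ v)) b =
          ∑ c, blockAvgM τ A b c * (phat c * v c) := by
        intro b
        rw [hQv' v]; simp [mulVec, dotProduct]
      have e3 : (n : ℝ) ^ 2 * (u ⬝ᵥ (Q *ᵥ (blockAvgM τ A *ᵥ (Q *ᵥ v)))) =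
          ∑ b, ∑ c, (n : ℝ) ^ 2 *
            (u b * (phat b * (blockAvgM τ A b c * (phat c * v c)))) := by
        simp only [dotProduct, hQv, e2, Finset.mul_sum]
      rw [e3]
      refine Finset.sum_congr rfl fun b _ => Finset.sum_congr rfl fun c _ => ?_
      have hb := (hnb b).ne'
      have hc := (hnb c).ne'
      show (u b * v c) * _ = (n : ℝ) ^ 2 * (u b * (phat b * ((1 / ((blockSize τ b : ℝ) * (blockSize τ c : ℝ)) *
        (∑ i ∈ univ.filter (fun i => τ i = b), ∑ j ∈ univ.filter (fun j => τ j = c), A i j)) * (phat c * v c))))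
      rw [hphat, hphat]
      field_simp
    · have hL : z ⬝ᵥ (P *ᵥ u) = ∑ b, u b *
          ∑ i ∈ univ.filter (fun i => τ i = b), z i := by
        have step0 : z ⬝ᵥ (P *ᵥ u) = ∑ i, z i * u (τ i) := by
          simp only [dotProduct, hPu]
        rw [step0, ← Finset.sum_fiberwise univ τ (fun i => z i * u (τ i))]
        refine Finset.sum_congr rfl fun b _ => ?_
        rw [Finset.mul_sum]
        refine Finset.sum_congr rfl fun i hi => ?_
        simp only [mem_filter] at hi
        rw [hi.2]
        ring
      rw [hL]
      have e3 : (n : ℝ) * (blockAvgV τ z ⬝ᵥ (Q *ᵥ u)) =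
          ∑ b, (n : ℝ) * (blockAvgV τ z b * (phat b * u b)) := by
        simp only [dotProduct, hQv, Finset.mul_sum]
      rw [e3]
      refine Finset.sum_congr rfl fun b _ => ?_
      have hb := (hnb b).ne'
      show u b * _ = (n : ℝ) * ((1 / (blockSize τ b : ℝ) *
        (∑ i ∈ univ.filter (fun i => τ i = b), z i)) * (phat b * u b))
      rw [hphat]
      field_simp
  · -- block subspace invariance
    intro u
    exact ⟨((1 : ℝ) / n) • (Alam *ᵥ u), by rw [hJP, mulVec_smul]⟩
  · -- orthogonal complement invariance
    intro x hx u
    have hsw : (J *ᵥ x) ⬝ᵥ (P *ᵥ u) = x ⬝ᵥ (J *ᵥ (P *ᵥ u)) := by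
      rw [dotProduct_comm, dotProduct_mulVec, ← mulVec_transpose, hJsym, dotProduct_comm]
    rw [hsw, hJP, dotProduct_smul, smul_eq_mul, hx, mul_zero]
  · -- inverse formula
    intro z'
    have hAA : Alam *ᵥ (Alam⁻¹ *ᵥ z') = z' := by
      rw [mulVec_mulVec, Matrix.mul_nonsing_inv _ hAdet, one_mulVec]
    have hkey := hJP (Alam⁻¹ *ᵥ z')
    rw [hAA] at hkey
    have hPz : P *ᵥ z' = (n : ℝ) • (J *ᵥ (P *ᵥ (Alam⁻¹ *ᵥ z'))) := by
      rw [hkey, smul_smul, mul_one_div, div_self hn', one_smul]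
    rw [hPz, mulVec_smul, mulVec_mulVec, Matrix.nonsing_inv_mul _ hJdet, one_mulVec]
end

section
/- Let N ∈ ℝ^{r×r} be symmetric positive semidefinite with |N_{ab}| ≤ K* for all a, b, let θ ∈ (0,1)^r, ε ∈ {−1,+1}^r, y_i = ε_{τ(i)}, Y = diag(y), Y_r = diag(ε), M = P N Pᵀ, J = (1/n)·diag(φ''(θ_{τ(1)}), …, φ''(θ_{τ(n)})) + (1/(λn²))·Y M Y, and A_λ = diag(φ''(θ_1), …, φ''(θ_r)) + (1/λ)·Y_r N Q Y_r. Fix a ∈ {1,…,r}, set m_a = (N_{a,τ(i)})_{i=1}^n and r_a = Y_r A_λ^{−1} Y_r (N_{a1}, …, N_{ar})ᵀ. Then Y J^{−1} Y m_a = n·P r_a, and moreover √(∑_{b=1}^r p̂_b·r_{ab}²) ≤ K*/4 and ∑_{b=1}^r p̂_b·|r_{ab}| ≤ K*/4. -/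
open Matrix Set Finset

private lemma sum_fiber' {n r : ℕ} (τ : Fin n → Fin r) (u : Fin n → ℝ) (g : Fin r → ℝ) :
    ∑ i, u i * g (τ i) = ∑ b, (∑ i ∈ univ.filter (fun i => τ i = b), u i) * g b := by
  rw [← Finset.sum_fiberwise_of_maps_to (fun i _ => Finset.mem_univ (τ i))
    (fun i => u i * g (τ i))]
  refine Finset.sum_congr rfl fun b _ => ?_
  rw [Finset.sum_mul]
  refine Finset.sum_congr rfl fun i hi => ?_
  rw [(Finset.mem_filter.1 hi).2]

private lemma double_group' {n r : ℕ} (τ : Fin n → Fin r) (N : Matrix (Fin r) (Fin r) ℝ)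
    (u : Fin n → ℝ) :
    ∑ i, ∑ j, u i * N (τ i) (τ j) * u j
      = (fun b => ∑ i ∈ univ.filter (fun i => τ i = b), u i) ⬝ᵥ
        (N *ᵥ (fun b => ∑ i ∈ univ.filter (fun i => τ i = b), u i)) := by
  set w : Fin r → ℝ := fun b => ∑ i ∈ univ.filter (fun i => τ i = b), u i with hw
  have h1 : ∀ c : Fin r, ∑ j, u j * N c (τ j) = ∑ b, w b * N c b := by
    intro c
    exact sum_fiber' τ u (fun b => N c b)
  calc ∑ i, ∑ j, u i * N (τ i) (τ j) * u j
      = ∑ i, u i * (∑ b, w b * N (τ i) b) := by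
        refine Finset.sum_congr rfl fun i _ => ?_
        rw [← h1 (τ i), Finset.mul_sum]
        exact Finset.sum_congr rfl fun j _ => by ring
    _ = ∑ c, w c * (∑ b, w b * N c b) := sum_fiber' τ u (fun c => ∑ b, w b * N c b)
    _ = _ := by
        refine Finset.sum_congr rfl fun c _ => ?_
        rw [Matrix.mulVec, dotProduct, Finset.mul_sum, Finset.mul_sum]
        exact Finset.sum_congr rfl fun b _ => by ring

/-- Block test-representer identity `Y J⁻¹ Y m_a = n·P r_a` and the weighted
bounds `√(∑_b p̂_b r_{ab}²) ≤ K*/4` and `∑_b p̂_b |r_{ab}| ≤ K*/4`. -/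
theorem block_test_representer
    {n r : ℕ} (hn : 0 < n) (hr : 0 < r) (lam : ℝ) (hlam : 0 < lam)
    (Kstar : ℝ) (hKstar : 0 < Kstar)
    (τ : Fin n → Fin r) (hτ : Function.Surjective τ)
    (P : Matrix (Fin n) (Fin r) ℝ)
    (hP : ∀ i b, P i b = if τ i = b then 1 else 0)
    (phat : Fin r → ℝ) (hphat : ∀ b, phat b = (blockSize τ b : ℝ) / n)
    (Q : Matrix (Fin r) (Fin r) ℝ) (hQ : Q = Matrix.diagonal phat)
    (N : Matrix (Fin r) (Fin r) ℝ) (hN : N.PosSemidef)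
    (hNbdd : ∀ a b, |N a b| ≤ Kstar)
    (θ : Fin r → ℝ) (hθ : ∀ b, θ b ∈ Ioo (0:ℝ) 1)
    (ε : Fin r → ℝ) (hε : ∀ a, ε a = 1 ∨ ε a = -1)
    (y : Fin n → ℝ) (hy : ∀ i, y i = ε (τ i))
    (Y : Matrix (Fin n) (Fin n) ℝ) (hY : Y = Matrix.diagonal y)
    (Yr : Matrix (Fin r) (Fin r) ℝ) (hYr : Yr = Matrix.diagonal ε)
    (M : Matrix (Fin n) (Fin n) ℝ) (hM : M = P * N * Pᵀ)
    (J : Matrix (Fin n) (Fin n) ℝ)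
    (hJ : J = ((1 : ℝ) / n) • Matrix.diagonal (fun i => phiEnt'' (θ (τ i))) +
      (1 / (lam * (n : ℝ) ^ 2)) • (Y * M * Y))
    (Alam : Matrix (Fin r) (Fin r) ℝ)
    (hAlam : Alam = Matrix.diagonal (fun b => phiEnt'' (θ b)) +
      (1 / lam) • (Yr * N * Q * Yr))
    (a : Fin r)
    (ma : Fin n → ℝ) (hma : ∀ i, ma i = N a (τ i))
    (ra : Fin r → ℝ)
    (hra : ra = Yr *ᵥ (Alam⁻¹ *ᵥ (Yr *ᵥ fun b => N a b))) :
    Y *ᵥ (J⁻¹ *ᵥ (Y *ᵥ ma)) = (n : ℝ) • (P *ᵥ ra) ∧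
    Real.sqrt (∑ b, phat b * (ra b) ^ 2) ≤ Kstar / 4 ∧
    ∑ b, phat b * |ra b| ≤ Kstar / 4 := by
  classical
  have hn' : (0:ℝ) < n := by exact_mod_cast hn
  have hnne : (n:ℝ) ≠ 0 := ne_of_gt hn'
  have hlne : lam ≠ 0 := ne_of_gt hlam
  have hε2 : ∀ b, ε b * ε b = 1 := by
    intro b; rcases hε b with h | h <;> rw [h] <;> norm_num
  have hy2 : ∀ i, y i * y i = 1 := by intro i; rw [hy]; exact hε2 _
  have hεabs : ∀ b, |ε b| = 1 := by
    intro b; rcases hε b with h | h <;> rw [h] <;> norm_num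
  have hphat_pos : ∀ b, 0 < phat b := by
    intro b
    rw [hphat]
    apply div_pos _ hn'
    have h1 : 0 < blockSize τ b := by
      obtain ⟨i, hi⟩ := hτ b
      exact Finset.card_pos.2 ⟨i, Finset.mem_filter.2 ⟨Finset.mem_univ i, hi⟩⟩
    exact_mod_cast h1
  have hphat_nn : ∀ b, 0 ≤ phat b := fun b => (hphat_pos b).le
  have hbs : ∀ b, (blockSize τ b : ℝ) = phat b * n := by
    intro b; rw [hphat]; field_simp
  have hsum_phat : ∑ b, phat b = 1 := by
    have hcard : (Finset.univ : Finset (Fin n)).card = ∑ b, blockSize τ b :=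
      Finset.card_eq_sum_card_fiberwise (fun i _ => Finset.mem_univ (τ i))
    have h2 : ∑ b, phat b = (∑ b, (blockSize τ b : ℝ)) / n := by
      rw [Finset.sum_div]; exact Finset.sum_congr rfl fun b _ => hphat b
    rw [h2, ← Nat.cast_sum, ← hcard, Finset.card_univ, Fintype.card_fin]
    exact div_self hnne
  have hphi4 : ∀ b, (4:ℝ) ≤ phiEnt'' (θ b) := by
    intro b
    obtain ⟨h0, h1⟩ := hθ b
    have h1' : 0 < 1 - θ b := by linarith
    rw [phiEnt'', div_add_div _ _ (ne_of_gt h0) (ne_of_gt h1'), le_div_iff₀ (by positivity)]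
    nlinarith [sq_nonneg (2 * θ b - 1)]
  have hphi_pos : ∀ b, 0 < phiEnt'' (θ b) := fun b => lt_of_lt_of_le (by norm_num) (hphi4 b)
  -- entrywise descriptions
  have hMe : ∀ i j, M i j = N (τ i) (τ j) := by
    intro i j
    rw [hM]
    simp [Matrix.mul_apply, hP, Matrix.transpose_apply, ite_mul, mul_ite]
  have hPv : ∀ (w : Fin r → ℝ) i, (P *ᵥ w) i = w (τ i) := by
    intro w i
    simp [Matrix.mulVec, dotProduct, hP, ite_mul]
  have hYMY : ∀ i j, (Y * M * Y) i j = y i * (N (τ i) (τ j) * y j) := by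
    intro i j
    rw [hY, Matrix.mul_diagonal, Matrix.diagonal_mul, hMe, mul_assoc]
  have hGe : ∀ c b, (Yr * N * Q * Yr) c b = ε c * N c b * (phat b * ε b) := by
    intro c b
    rw [hYr, hQ, Matrix.mul_diagonal, Matrix.mul_diagonal, Matrix.diagonal_mul]
    ring
  have hAv : ∀ (x : Fin r → ℝ) c, (Alam *ᵥ x) c
      = phiEnt'' (θ c) * x c + (1/lam) * ∑ b, ε c * N c b * (phat b * ε b) * x b := by
    intro x c
    rw [hAlam, Matrix.add_mulVec, Matrix.smul_mulVec, Pi.add_apply, Pi.smul_apply,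
      Matrix.mulVec_diagonal, smul_eq_mul]
    congr 1
    congr 1
    rw [Matrix.mulVec, dotProduct]
    exact Finset.sum_congr rfl fun b _ => by rw [hGe]
  have hJv : ∀ (x : Fin n → ℝ) i, (J *ᵥ x) i
      = (1/(n:ℝ)) * (phiEnt'' (θ (τ i)) * x i)
        + (1/(lam * (n:ℝ)^2)) * ∑ j, y i * (N (τ i) (τ j) * y j) * x j := by
    intro x i
    rw [hJ, Matrix.add_mulVec, Matrix.smul_mulVec, Matrix.smul_mulVec,
      Pi.add_apply, Pi.smul_apply, Pi.smul_apply, Matrix.mulVec_diagonal, smul_eq_mul,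
      smul_eq_mul]
    congr 1
    congr 1
    rw [Matrix.mulVec, dotProduct]
    exact Finset.sum_congr rfl fun j _ => by rw [hYMY]
  -- quadratic forms
  have quad : ∀ x : Fin r → ℝ,
      ∑ c, phat c * x c * ((Alam *ᵥ x) c)
      = (∑ c, phat c * phiEnt'' (θ c) * x c ^ 2)
        + (1/lam) * ((fun b => ε b * (phat b * x b)) ⬝ᵥ
            (N *ᵥ fun b => ε b * (phat b * x b))) := by
    intro x
    simp only [hAv]
    simp only [dotProduct, Matrix.mulVec, mul_add, Finset.mul_sum, Finset.sum_add_distrib]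
    congr 1
    · exact Finset.sum_congr rfl fun c _ => by ring
    · exact Finset.sum_congr rfl fun c _ => Finset.sum_congr rfl fun b _ => by ring
  have quadJ : ∀ x : Fin n → ℝ,
      ∑ i, x i * ((J *ᵥ x) i)
      = (1/(n:ℝ)) * ∑ i, phiEnt'' (θ (τ i)) * x i ^ 2
        + (1/(lam * (n:ℝ)^2)) *
          ((fun b => ∑ i ∈ univ.filter (fun i => τ i = b), y i * x i) ⬝ᵥ
           (N *ᵥ fun b => ∑ i ∈ univ.filter (fun i => τ i = b), y i * x i)) := by
    intro x
    rw [← double_group' τ N (fun i => y i * x i)]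
    simp only [hJv]
    simp only [mul_add, Finset.mul_sum, Finset.sum_add_distrib]
    congr 1
    · exact Finset.sum_congr rfl fun i _ => by ring
    · exact Finset.sum_congr rfl fun i _ => Finset.sum_congr rfl fun j _ => by ring
  -- invertibility of Alam
  have hAker : ∀ x : Fin r → ℝ, Alam *ᵥ x = 0 → x = 0 := by
    intro x hx
    have h0 : ∑ c, phat c * x c * ((Alam *ᵥ x) c) = 0 := by
      rw [hx]; simp
    rw [quad x] at h0
    have hpsd : 0 ≤ (fun b => ε b * (phat b * x b)) ⬝ᵥ
        (N *ᵥ fun b => ε b * (phat b * x b)) := by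
      have h := hN.dotProduct_mulVec_nonneg (fun b => ε b * (phat b * x b))
      simpa using h
    have hnn : ∀ c ∈ (univ : Finset (Fin r)), 0 ≤ phat c * phiEnt'' (θ c) * x c ^ 2 :=
      fun c _ => mul_nonneg (mul_nonneg (hphat_nn c) (hphi_pos c).le) (sq_nonneg _)
    have hS0 : ∑ c, phat c * phiEnt'' (θ c) * x c ^ 2 = 0 := by
      have h1 : 0 ≤ ∑ c, phat c * phiEnt'' (θ c) * x c ^ 2 := Finset.sum_nonneg hnn
      nlinarith [mul_nonneg (by positivity : (0:ℝ) ≤ 1/lam) hpsd]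
    funext c
    have hterm := (Finset.sum_eq_zero_iff_of_nonneg hnn).1 hS0 c (Finset.mem_univ c)
    have hx2 : x c ^ 2 = 0 := by
      nlinarith [mul_pos (hphat_pos c) (hphi_pos c), sq_nonneg (x c)]
    simpa using pow_eq_zero_iff (two_ne_zero) |>.1 hx2
  have hAdet : IsUnit Alam.det := by
    rw [← Matrix.isUnit_iff_isUnit_det, ← Matrix.mulVec_injective_iff_isUnit]
    intro x1 x2 h12
    have h := hAker (x1 - x2) (by rw [Matrix.mulVec_sub, h12, sub_self])
    exact sub_eq_zero.1 h
  -- invertibility of J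
  have hJker : ∀ x : Fin n → ℝ, J *ᵥ x = 0 → x = 0 := by
    intro x hx
    have h0 : ∑ i, x i * ((J *ᵥ x) i) = 0 := by
      rw [hx]; simp
    rw [quadJ x] at h0
    have hpsd : 0 ≤ (fun b => ∑ i ∈ univ.filter (fun i => τ i = b), y i * x i) ⬝ᵥ
        (N *ᵥ fun b => ∑ i ∈ univ.filter (fun i => τ i = b), y i * x i) := by
      have h := hN.dotProduct_mulVec_nonneg (fun b => ∑ i ∈ univ.filter (fun i => τ i = b), y i * x i)
      simpa using h
    have hnn : ∀ i ∈ (univ : Finset (Fin n)), 0 ≤ phiEnt'' (θ (τ i)) * x i ^ 2 :=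
      fun i _ => mul_nonneg (hphi_pos _).le (sq_nonneg _)
    have hS0 : ∑ i, phiEnt'' (θ (τ i)) * x i ^ 2 = 0 := by
      have h1 : 0 ≤ ∑ i, phiEnt'' (θ (τ i)) * x i ^ 2 := Finset.sum_nonneg hnn
      have h2 : (0:ℝ) < 1/(n:ℝ) := by positivity
      nlinarith [mul_nonneg (by positivity : (0:ℝ) ≤ 1/(lam * (n:ℝ)^2)) hpsd]
    funext i
    have hterm := (Finset.sum_eq_zero_iff_of_nonneg hnn).1 hS0 i (Finset.mem_univ i)
    have hx2 : x i ^ 2 = 0 := by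
      nlinarith [hphi_pos (τ i), sq_nonneg (x i)]
    simpa using pow_eq_zero_iff (two_ne_zero) |>.1 hx2
  have hJdet : IsUnit J.det := by
    rw [← Matrix.isUnit_iff_isUnit_det, ← Matrix.mulVec_injective_iff_isUnit]
    intro x1 x2 h12
    have h := hJker (x1 - x2) (by rw [Matrix.mulVec_sub, h12, sub_self])
    exact sub_eq_zero.1 h
  -- the vector s and its defining equation
  set v : Fin r → ℝ := fun b => N a b with hv
  set s : Fin r → ℝ := Alam⁻¹ *ᵥ (Yr *ᵥ v) with hs
  have hAs : Alam *ᵥ s = Yr *ᵥ v := by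
    rw [hs, Matrix.mulVec_mulVec, Matrix.mul_nonsing_inv _ hAdet, Matrix.one_mulVec]
  have hras : ∀ b, ra b = ε b * s b := by
    intro b
    rw [hra, hs, hv, hYr, Matrix.mulVec_diagonal]
  -- part 1 : the representer identity
  have hXj : ∀ j, ((n:ℝ) • (Y *ᵥ (P *ᵥ ra))) j = n * (y j * ra (τ j)) := by
    intro j
    rw [Pi.smul_apply, smul_eq_mul, hY, Matrix.mulVec_diagonal, hPv]
  have hJX : J *ᵥ ((n:ℝ) • (Y *ᵥ (P *ᵥ ra))) = Y *ᵥ ma := by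
    funext i
    have hsum : ∑ j, y i * (N (τ i) (τ j) * y j) * (((n:ℝ) • (Y *ᵥ (P *ᵥ ra))) j)
        = (n:ℝ)^2 * ∑ b, ε (τ i) * N (τ i) b * (phat b * ε b) * s b := by
      calc ∑ j, y i * (N (τ i) (τ j) * y j) * (((n:ℝ) • (Y *ᵥ (P *ᵥ ra))) j)
          = ∑ j, (fun _ : Fin n => (1:ℝ)) j *
              ((fun b => (n:ℝ) * (y i * (N (τ i) b * ra b))) (τ j)) := by
            refine Finset.sum_congr rfl fun j _ => ?_
            rw [hXj j]
            simp only
            linear_combination (y i * N (τ i) (τ j) * ra (τ j) * (n:ℝ)) * hy2 j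
        _ = ∑ b, (∑ j ∈ univ.filter (fun j => τ j = b), (1:ℝ)) *
              ((n:ℝ) * (y i * (N (τ i) b * ra b))) :=
            sum_fiber' τ (fun _ => 1) (fun b => (n:ℝ) * (y i * (N (τ i) b * ra b)))
        _ = (n:ℝ)^2 * ∑ b, ε (τ i) * N (τ i) b * (phat b * ε b) * s b := by
            rw [Finset.mul_sum]
            refine Finset.sum_congr rfl fun b _ => ?_
            have h1 : ∑ j ∈ univ.filter (fun j => τ j = b), (1:ℝ)
                = (blockSize τ b : ℝ) := by
              rw [Finset.sum_const, blockSize, nsmul_eq_mul, mul_one]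
            rw [h1, hbs b, hras b, hy i]
            ring
    rw [hJv, hsum, hXj i, hy i, hras (τ i)]
    have key : phiEnt'' (θ (τ i)) * s (τ i)
        + (1/lam) * ∑ b, ε (τ i) * N (τ i) b * (phat b * ε b) * s b
        = ε (τ i) * N a (τ i) := by
      rw [← hAv s (τ i), hAs, hYr, Matrix.mulVec_diagonal]
    have hB : (1:ℝ)/(n:ℝ) * (phiEnt'' (θ (τ i)) * ((n:ℝ) * (ε (τ i) * (ε (τ i) * s (τ i)))))
        = phiEnt'' (θ (τ i)) * s (τ i) := by
      have he := hε2 (τ i)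
      field_simp
      linear_combination (phiEnt'' (θ (τ i)) * s (τ i)) * he
    have hA : (1:ℝ)/(lam * (n:ℝ)^2) *
        ((n:ℝ)^2 * ∑ b, ε (τ i) * N (τ i) b * (phat b * ε b) * s b)
        = (1/lam) * ∑ b, ε (τ i) * N (τ i) b * (phat b * ε b) * s b := by
      field_simp
    rw [hB, hA, key, hY, Matrix.mulVec_diagonal, hma i, hy i]
  have part1 : Y *ᵥ (J⁻¹ *ᵥ (Y *ᵥ ma)) = (n : ℝ) • (P *ᵥ ra) := by
    have h1 : J⁻¹ *ᵥ (Y *ᵥ ma) = (n:ℝ) • (Y *ᵥ (P *ᵥ ra)) := by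
      rw [← hJX, Matrix.mulVec_mulVec, Matrix.nonsing_inv_mul _ hJdet, Matrix.one_mulVec]
    rw [h1, Matrix.mulVec_smul]
    congr 1
    funext i
    rw [hY, Matrix.mulVec_diagonal, Matrix.mulVec_diagonal, ← mul_assoc, hy2, one_mul]
  -- bounds
  set S : ℝ := ∑ b, phat b * s b ^ 2 with hS
  set T : ℝ := ∑ b, phat b * |s b| with hT
  have hS_nn : 0 ≤ S := Finset.sum_nonneg fun b _ =>
    mul_nonneg (hphat_nn b) (sq_nonneg _)
  have hT_nn : 0 ≤ T := Finset.sum_nonneg fun b _ =>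
    mul_nonneg (hphat_nn b) (abs_nonneg _)
  have hquadS := quad s
  have hlhs : ∑ c, phat c * s c * ((Alam *ᵥ s) c)
      = ∑ c, phat c * s c * (ε c * N a c) := by
    refine Finset.sum_congr rfl fun c _ => ?_
    rw [hAs, hYr, Matrix.mulVec_diagonal]
  have hpsdS : 0 ≤ (fun b => ε b * (phat b * s b)) ⬝ᵥ
      (N *ᵥ fun b => ε b * (phat b * s b)) := by
    have h := hN.dotProduct_mulVec_nonneg (fun b => ε b * (phat b * s b))
    simpa using h
  have h4S : 4 * S ≤ ∑ c, phat c * phiEnt'' (θ c) * s c ^ 2 := by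
    rw [hS, Finset.mul_sum]
    refine Finset.sum_le_sum fun c _ => ?_
    calc 4 * (phat c * s c ^ 2) ≤ phiEnt'' (θ c) * (phat c * s c ^ 2) :=
          mul_le_mul_of_nonneg_right (hphi4 c)
            (mul_nonneg (hphat_nn c) (sq_nonneg (s c)))
      _ = phat c * phiEnt'' (θ c) * s c ^ 2 := by ring
  have hup : ∑ c, phat c * s c * (ε c * N a c) ≤ Kstar * T := by
    rw [hT, Finset.mul_sum]
    refine Finset.sum_le_sum fun c _ => ?_
    have h1 : phat c * s c * (ε c * N a c) ≤ |phat c * s c * (ε c * N a c)| :=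
      le_abs_self _
    have h2 : |phat c * s c * (ε c * N a c)| = phat c * |s c| * |N a c| := by
      rw [abs_mul, abs_mul, abs_mul, hεabs, abs_of_nonneg (hphat_nn c)]
      ring
    have h3 : phat c * |s c| * |N a c| ≤ phat c * |s c| * Kstar :=
      mul_le_mul_of_nonneg_left (hNbdd a c)
        (mul_nonneg (hphat_nn c) (abs_nonneg _))
    calc phat c * s c * (ε c * N a c) ≤ phat c * |s c| * |N a c| := by
          rw [← h2]; exact h1
      _ ≤ phat c * |s c| * Kstar := h3
      _ = Kstar * (phat c * |s c|) := by ring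
  have hST : 4 * S ≤ Kstar * T := by
    have h := hquadS
    rw [hlhs] at h
    have hnn' : (0:ℝ) ≤ 1/lam * ((fun b => ε b * (phat b * s b)) ⬝ᵥ
        (N *ᵥ fun b => ε b * (phat b * s b))) :=
      mul_nonneg (by positivity) hpsdS
    linarith
  have hCS : T ^ 2 ≤ S := by
    have h := Finset.sum_mul_sq_le_sq_mul_sq univ
      (fun b => Real.sqrt (phat b)) (fun b => Real.sqrt (phat b) * |s b|)
    have e1 : ∑ b, Real.sqrt (phat b) * (Real.sqrt (phat b) * |s b|) = T := by
      rw [hT]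
      refine Finset.sum_congr rfl fun b _ => ?_
      rw [← mul_assoc, Real.mul_self_sqrt (hphat_nn b)]
    have e2 : ∑ b, Real.sqrt (phat b) ^ 2 = 1 := by
      rw [← hsum_phat]
      exact Finset.sum_congr rfl fun b _ => Real.sq_sqrt (hphat_nn b)
    have e3 : ∑ b, (Real.sqrt (phat b) * |s b|) ^ 2 = S := by
      rw [hS]
      refine Finset.sum_congr rfl fun b _ => ?_
      rw [mul_pow, Real.sq_sqrt (hphat_nn b), sq_abs]
    rw [e1, e2, e3, one_mul] at h
    exact h
  have hu2 : Real.sqrt S ^ 2 = S := Real.sq_sqrt hS_nn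
  have hu : 0 ≤ Real.sqrt S := Real.sqrt_nonneg S
  have hTle : T ≤ Real.sqrt S := Real.le_sqrt_of_sq_le hCS
  have hsqrtS : Real.sqrt S ≤ Kstar / 4 := by
    have h1 : 4 * Real.sqrt S ^ 2 ≤ Kstar * Real.sqrt S := by
      rw [hu2]
      calc 4 * S ≤ Kstar * T := hST
        _ ≤ Kstar * Real.sqrt S := mul_le_mul_of_nonneg_left hTle hKstar.le
    rcases eq_or_lt_of_le hu with h0 | hpos
    · rw [← h0]; positivity
    · have h2 : (4 * Real.sqrt S) * Real.sqrt S ≤ Kstar * Real.sqrt S := by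
        calc (4 * Real.sqrt S) * Real.sqrt S = 4 * Real.sqrt S ^ 2 := by ring
          _ ≤ Kstar * Real.sqrt S := h1
      have h3 : 4 * Real.sqrt S ≤ Kstar := le_of_mul_le_mul_right h2 hpos
      linarith
  have hrs2 : ∑ b, phat b * (ra b) ^ 2 = S := by
    rw [hS]
    refine Finset.sum_congr rfl fun b _ => ?_
    rw [hras b]
    rcases hε b with h | h <;> rw [h] <;> ring
  have hrabs : ∑ b, phat b * |ra b| = T := by
    rw [hT]
    refine Finset.sum_congr rfl fun b _ => ?_
    rw [hras b, abs_mul, hεabs b, one_mul]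
  refine ⟨part1, ?_, ?_⟩
  · rw [hrs2]; exact hsqrtS
  · rw [hrabs]; exact le_trans hTle hsqrtS
end

section
/- Let G, M be symmetric positive semidefinite n×n matrices with dual minimizers c_G, c_M, let Y = diag(y), and let k, m ∈ ℝ^n with ‖k‖₂ ≤ K*·√n. Then |s_{k,G} − s_{m,M}| ≤ (K*/(4λ²))·‖(G − M)·Y c_M‖₂ / n^{3/2} + (1/λ)·|(k − m)ᵀ Y c_M| / n. -/
open Matrix Set

/-- The score `s_{k,G} = (1/(λn))·kᵀ(y⊙c)`. -/
noncomputable def score {n : ℕ} (lam : ℝ) (y k c : Fin n → ℝ) : ℝ :=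
  (1 / (lam * n)) * (k ⬝ᵥ fun i => y i * c i)

noncomputable def fAux (c : ℝ) : ℝ := phiEnt c - 2*c^2
noncomputable def gAux (c : ℝ) : ℝ := Real.log c - Real.log (1-c) - 4*c

lemma hasDerivAt_fAux {c : ℝ} (h : c ∈ Ioo (0:ℝ) 1) : HasDerivAt fAux (gAux c) c := by
  have h1 : HasDerivAt (fun x : ℝ => x * Real.log x) (Real.log c + 1) c :=
    Real.hasDerivAt_mul_log (ne_of_gt h.1)
  have h2 : HasDerivAt (fun x : ℝ => (1-x) * Real.log (1-x)) (-(Real.log (1-c) + 1)) c := by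
    have hu : HasDerivAt (fun x : ℝ => 1 - x) (-1) c := by
      simpa using (hasDerivAt_id c).const_sub 1
    have := (Real.hasDerivAt_mul_log (x := 1 - c) (by linarith [h.2])).comp c hu
    simpa [mul_comm, Function.comp_def] using this
  have h3 : HasDerivAt (fun x : ℝ => 2*x^2) (4*c) c := by
    have := ((hasDerivAt_pow 2 c).const_mul (2:ℝ))
    refine this.congr_deriv ?_
    push_cast
    ring
  have hfun : fAux = fun x => (x * Real.log x + (1-x) * Real.log (1-x)) - 2*x^2 := by
    funext x; simp [fAux, phiEnt]
  rw [hfun]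
  have := (h1.add h2).sub h3
  refine this.congr_deriv ?_
  simp [gAux]; ring

lemma hasDerivAt_gAux {c : ℝ} (h : c ∈ Ioo (0:ℝ) 1) :
    HasDerivAt gAux (c⁻¹ + (1-c)⁻¹ - 4) c := by
  have h1 : HasDerivAt Real.log c⁻¹ c := Real.hasDerivAt_log (ne_of_gt h.1)
  have h2 : HasDerivAt (fun x : ℝ => Real.log (1-x)) (-(1-c)⁻¹) c := by
    have hu : HasDerivAt (fun x : ℝ => 1 - x) (-1) c := by
      simpa using (hasDerivAt_id c).const_sub 1
    have := (Real.hasDerivAt_log (x := 1 - c) (ne_of_gt (by linarith [h.2]))).comp c hu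
    simpa [Function.comp_def] using this
  have h3 : HasDerivAt (fun x : ℝ => 4*x) (4:ℝ) c := by
    simpa using (hasDerivAt_id c).const_mul (4:ℝ)
  have := (h1.sub h2).sub h3
  refine this.congr_deriv ?_
  ring

lemma convexOn_fAux : ConvexOn ℝ (Icc (0:ℝ) 1) fAux := by
  have hC : ContinuousOn fAux (Icc 0 1) := by
    apply Continuous.continuousOn
    have c1 : Continuous fun x : ℝ => x * Real.log x := Real.continuous_mul_log
    have c2 : Continuous fun x : ℝ => (1-x) * Real.log (1-x) :=
      c1.comp (continuous_const.sub continuous_id)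
    unfold fAux phiEnt
    continuity
  have hint : interior (Icc (0:ℝ) 1) = Ioo 0 1 := interior_Icc
  apply convexOn_of_deriv2_nonneg (convex_Icc 0 1) hC
  · rw [hint]
    intro x hx
    exact (hasDerivAt_fAux hx).differentiableAt.differentiableWithinAt
  · rw [hint]
    intro x hx
    have he : deriv fAux =ᶠ[nhds x] gAux :=
      Filter.eventually_of_mem (isOpen_Ioo.mem_nhds hx) (fun y hy => (hasDerivAt_fAux hy).deriv)
    exact (((hasDerivAt_gAux hx).differentiableAt).congr_of_eventuallyEq he).differentiableWithinAt
  · rw [hint]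
    intro x hx
    have he : deriv fAux =ᶠ[nhds x] gAux :=
      Filter.eventually_of_mem (isOpen_Ioo.mem_nhds hx) (fun y hy => (hasDerivAt_fAux hy).deriv)
    have hd : deriv (deriv fAux) x = x⁻¹ + (1-x)⁻¹ - 4 := by
      rw [Filter.EventuallyEq.deriv_eq he]
      exact (hasDerivAt_gAux hx).deriv
    simp only [Function.iterate_succ, Function.iterate_zero, Function.comp_apply, id]
    rw [hd]
    have h0 : 0 < x := hx.1
    have h1 : 0 < 1 - x := by linarith [hx.2]
    have key : x * (1-x) ≤ 1/4 := by nlinarith [sq_nonneg (x - 1/2)]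
    have heq : x⁻¹ + (1-x)⁻¹ = (x*(1-x))⁻¹ := by
      field_simp
      ring
    rw [heq]
    have hpos : 0 < x*(1-x) := by positivity
    have h4 : (4:ℝ) ≤ (x*(1-x))⁻¹ := by
      have := one_div_le_one_div_of_le hpos key
      rw [one_div, one_div] at this
      norm_num at this
      rw [mul_inv]
      linarith
    linarith

lemma phi_sc {a b : ℝ} (ha : a ∈ Icc (0:ℝ) 1) (hb : b ∈ Icc (0:ℝ) 1)
    {t s : ℝ} (ht : 0 ≤ t) (hs : 0 ≤ s) (hts : t + s = 1) :
    phiEnt (t*a + s*b) ≤ t * phiEnt a + s * phiEnt b - 2*t*s*(a-b)^2 := by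
  have := convexOn_fAux.2 ha hb ht hs hts
  simp only [smul_eq_mul, fAux] at this
  have hid : 2*(t*a+s*b)^2 = 2*t*a^2+2*s*b^2 - 2*t*s*(a-b)^2 := by
    have hs' : s = 1 - t := by linarith
    subst hs'; ring
  nlinarith [this, hid]

variable {n : ℕ}

lemma dot_symm (K : Matrix (Fin n) (Fin n) ℝ) (hK : Kᵀ = K) (u w : Fin n → ℝ) :
    u ⬝ᵥ (K *ᵥ w) = w ⬝ᵥ (K *ᵥ u) := by
  rw [Matrix.dotProduct_mulVec, ← hK, Matrix.vecMul_transpose, dotProduct_comm, hK]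

lemma quad_combo (K : Matrix (Fin n) (Fin n) ℝ) (hK : Kᵀ = K) (a b : Fin n → ℝ) (t : ℝ) :
    ((fun i => (1-t)*a i + t*b i) ⬝ᵥ (K *ᵥ fun i => (1-t)*a i + t*b i))
    = (1-t)*(a ⬝ᵥ (K *ᵥ a)) + t*(b ⬝ᵥ (K *ᵥ b))
      - (1-t)*t*((fun i => b i - a i) ⬝ᵥ (K *ᵥ fun i => b i - a i)) := by
  have h1 : (fun i => (1-t)*a i + t*b i) = (1-t) • a + t • b := by
    funext i; simp [smul_eq_mul]
  have h2 : (fun i => b i - a i) = b - a := by funext i; simp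
  rw [h1, h2]
  simp only [Matrix.mulVec_add, Matrix.mulVec_smul, Matrix.mulVec_sub,
    dotProduct_add, add_dotProduct, dotProduct_smul,
    smul_dotProduct, dotProduct_sub, sub_dotProduct, smul_eq_mul]
  rw [dot_symm K hK b a]
  ring

lemma min_strong {n : ℕ} (hn : 0 < n) (lam : ℝ) (hlam : 0 < lam) (y : Fin n → ℝ)
    (K : Matrix (Fin n) (Fin n) ℝ) (hK : Kᵀ = K)
    (cstar c : Fin n → ℝ)
    (hstar : ∀ i, cstar i ∈ Icc (0:ℝ) 1)
    (hmin : IsMinOn (dualObj lam y K) {c | ∀ i, c i ∈ Icc (0:ℝ) 1} cstar)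
    (hc : ∀ i, c i ∈ Icc (0:ℝ) 1) :
    (2/n) * (∑ i, (c i - cstar i)^2)
      + (1/(2*lam*(n:ℝ)^2)) * ((fun i => y i * c i - y i * cstar i) ⬝ᵥ
          (K *ᵥ fun i => y i * c i - y i * cstar i))
    ≤ dualObj lam y K c - dualObj lam y K cstar := by
  have hn' : (0:ℝ) < n := Nat.cast_pos.mpr hn
  set SD : ℝ := ∑ i, (c i - cstar i)^2 with hSD
  set qD : ℝ := ((fun i => y i * c i - y i * cstar i) ⬝ᵥ
      (K *ᵥ fun i => y i * c i - y i * cstar i)) with hqD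
  set A : ℝ := (2/n) * SD + (1/(2*lam*(n:ℝ)^2)) * qD with hA
  have key : ∀ t : ℝ, t ∈ Ioo (0:ℝ) 1 →
      (1-t) * A ≤ dualObj lam y K c - dualObj lam y K cstar := by
    intro t ht
    set ct : Fin n → ℝ := fun i => (1-t) * cstar i + t * c i with hct
    have hctbox : ∀ i, ct i ∈ Icc (0:ℝ) 1 := by
      intro i
      have h1 := (hstar i).1; have h2 := (hstar i).2
      have h3 := (hc i).1; have h4 := (hc i).2
      constructor
      · have : 0 ≤ (1-t) * cstar i := mul_nonneg (by linarith [ht.2]) h1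
        have : 0 ≤ t * c i := mul_nonneg (le_of_lt ht.1) h3
        simp only [hct]; nlinarith [ht.1, ht.2]
      · simp only [hct]; nlinarith [ht.1, ht.2]
    have hmin' : dualObj lam y K cstar ≤ dualObj lam y K ct :=
      isMinOn_iff.mp hmin ct hctbox
    have hent : ∀ i, phiEnt (ct i) ≤
        (1-t) * phiEnt (cstar i) + t * phiEnt (c i) - 2*(1-t)*t*(c i - cstar i)^2 := by
      intro i
      have h := phi_sc (hstar i) (hc i) (t := 1-t) (s := t)
        (by linarith [ht.2]) (le_of_lt ht.1) (by ring)
      have e : (cstar i - c i)^2 = (c i - cstar i)^2 := by ring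
      rw [e] at h
      exact h
    have hsum : ∑ i, phiEnt (ct i) ≤
        (1-t) * (∑ i, phiEnt (cstar i)) + t * (∑ i, phiEnt (c i)) - 2*(1-t)*t*SD := by
      have h0 : ∑ i, phiEnt (ct i) ≤
          ∑ i, ((1-t) * phiEnt (cstar i) + t * phiEnt (c i) - 2*(1-t)*t*(c i - cstar i)^2) :=
        Finset.sum_le_sum (fun i _ => hent i)
      simp only [Finset.sum_sub_distrib, Finset.sum_add_distrib, ← Finset.mul_sum] at h0
      simpa [hSD] using h0
    have hq : ((fun i => y i * ct i) ⬝ᵥ (K *ᵥ fun i => y i * ct i)) =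
        (1-t) * ((fun i => y i * cstar i) ⬝ᵥ (K *ᵥ fun i => y i * cstar i))
        + t * ((fun i => y i * c i) ⬝ᵥ (K *ᵥ fun i => y i * c i))
        - (1-t)*t*qD := by
      have e : (fun i => y i * ct i) =
          fun i => (1-t) * (y i * cstar i) + t * (y i * c i) := by
        funext i; simp only [hct]; ring
      rw [e, hqD]
      exact quad_combo K hK _ _ t
    have hDct : dualObj lam y K ct ≤
        (1-t) * dualObj lam y K cstar + t * dualObj lam y K c - (1-t)*t*A := by
      unfold dualObj
      rw [hq]
      have h1 : (1:ℝ)/n * (∑ i, phiEnt (ct i)) ≤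
          (1:ℝ)/n * ((1-t) * (∑ i, phiEnt (cstar i)) + t * (∑ i, phiEnt (c i)) - 2*(1-t)*t*SD) :=
        mul_le_mul_of_nonneg_left hsum (by positivity)
      rw [hA]
      have e : (1-t) * ((1:ℝ)/n * (∑ i, phiEnt (cstar i)) +
            (1/(2*lam*(n:ℝ)^2)) * ((fun i => y i * cstar i) ⬝ᵥ (K *ᵥ fun i => y i * cstar i)))
          + t * ((1:ℝ)/n * (∑ i, phiEnt (c i)) +
            (1/(2*lam*(n:ℝ)^2)) * ((fun i => y i * c i) ⬝ᵥ (K *ᵥ fun i => y i * c i)))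
          - (1-t)*t*((2/n) * SD + (1/(2*lam*(n:ℝ)^2)) * qD)
          = (1:ℝ)/n * ((1-t) * (∑ i, phiEnt (cstar i)) + t * (∑ i, phiEnt (c i)) - 2*(1-t)*t*SD)
            + (1/(2*lam*(n:ℝ)^2)) * ((1-t) * ((fun i => y i * cstar i) ⬝ᵥ (K *ᵥ fun i => y i * cstar i))
              + t * ((fun i => y i * c i) ⬝ᵥ (K *ᵥ fun i => y i * c i)) - (1-t)*t*qD) := by
        ring
      rw [e]
      exact add_le_add_left h1 _
    have hcomb := hmin'.trans hDct
    have ht1 : 0 < t := ht.1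
    have h2 : t * ((1-t)*A) ≤ t * (dualObj lam y K c - dualObj lam y K cstar) := by
      nlinarith [hcomb]
    exact le_of_mul_le_mul_left h2 ht1
  have hlim : Filter.Tendsto (fun t : ℝ => (1-t) * A) (nhdsWithin 0 (Ioi 0)) (nhds A) := by
    have : Filter.Tendsto (fun t : ℝ => (1-t) * A) (nhds 0) (nhds A) := by
      have hcont : Continuous (fun t : ℝ => (1-t) * A) :=
        (continuous_const.sub continuous_id).mul continuous_const
      have := hcont.tendsto 0
      simpa using this
    exact this.mono_left nhdsWithin_le_nhds
  refine le_of_tendsto hlim ?_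
  filter_upwards [Ioo_mem_nhdsGT_of_mem (by constructor <;> norm_num : (0:ℝ) ∈ Ico (0:ℝ) 1)]
    with t ht
  exact key t ht

-- Cauchy-Schwarz
lemma abs_dot_le {n : ℕ} (v w : Fin n → ℝ) : |v ⬝ᵥ w| ≤ e2norm v * e2norm w := by
  have h := Finset.sum_mul_sq_le_sq_mul_sq Finset.univ v w
  have h1 : |v ⬝ᵥ w| = Real.sqrt ((∑ i, v i * w i)^2) := by
    rw [Real.sqrt_sq_eq_abs]; rfl
  rw [h1]
  unfold e2norm
  rw [← Real.sqrt_mul (by positivity)]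
  exact Real.sqrt_le_sqrt h

lemma key_id {n : ℕ} (G M : Matrix (Fin n) (Fin n) ℝ) (hGs : Gᵀ = G) (hMs : Mᵀ = M)
    (vM u : Fin n → ℝ) :
    (vM ⬝ᵥ (G *ᵥ vM)) - ((vM - u) ⬝ᵥ (G *ᵥ (vM - u)))
      + ((vM - u) ⬝ᵥ (M *ᵥ (vM - u))) - (vM ⬝ᵥ (M *ᵥ vM))
    = 2 * (u ⬝ᵥ ((G - M) *ᵥ vM)) - (u ⬝ᵥ (G *ᵥ u)) + (u ⬝ᵥ (M *ᵥ u)) := by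
  simp only [Matrix.mulVec_sub, Matrix.sub_mulVec, dotProduct_sub, sub_dotProduct]
  rw [dot_symm G hGs vM u, dot_symm M hMs vM u]
  ring


set_option maxHeartbeats 2000000 in
/-- Degree-action stability:
`|s_{k,G} − s_{m,M}| ≤ (K*/(4λ²))·‖(G−M)·Y c_M‖₂ / n^{3/2} + (1/λ)·|(k−m)ᵀ Y c_M| / n`. -/
theorem degree_action_stability
    {n : ℕ} (hn : 0 < n)
    (y : Fin n → ℝ) (hy : ∀ i, y i = 1 ∨ y i = -1)
    (lam : ℝ) (hlam : 0 < lam) (Kstar : ℝ) (hKstar : 0 < Kstar)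
    (G M : Matrix (Fin n) (Fin n) ℝ) (hG : G.PosSemidef) (hM : M.PosSemidef)
    (cG cM : Fin n → ℝ)
    (hcG : (∀ i, cG i ∈ Icc (0:ℝ) 1) ∧
      IsMinOn (dualObj lam y G) {c | ∀ i, c i ∈ Icc (0:ℝ) 1} cG)
    (hcM : (∀ i, cM i ∈ Icc (0:ℝ) 1) ∧
      IsMinOn (dualObj lam y M) {c | ∀ i, c i ∈ Icc (0:ℝ) 1} cM)
    (k m : Fin n → ℝ)
    (hk : e2norm k ≤ Kstar * Real.sqrt n) :
    |score lam y k cG - score lam y m cM| ≤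
      (Kstar / (4 * lam ^ 2)) *
          (e2norm ((G - M) *ᵥ fun i => y i * cM i) / (n : ℝ) ^ ((3 : ℝ) / 2)) +
        (1 / lam) * (|(k - m) ⬝ᵥ fun i => y i * cM i| / n) := by
  have hn' : (0:ℝ) < n := Nat.cast_pos.mpr hn
  -- symmetry of G and M
  have hGs : Gᵀ = G := by
    have := hG.1
    rwa [Matrix.IsHermitian, Matrix.conjTranspose_eq_transpose_of_trivial] at this
  have hMs : Mᵀ = M := by
    have := hM.1
    rwa [Matrix.IsHermitian, Matrix.conjTranspose_eq_transpose_of_trivial] at this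
  set vM : Fin n → ℝ := fun i => y i * cM i with hvM
  set vG : Fin n → ℝ := fun i => y i * cG i with hvG
  set u : Fin n → ℝ := fun i => y i * cM i - y i * cG i with hu
  set S : ℝ := ∑ i, (cM i - cG i)^2 with hS
  set W : ℝ := e2norm ((G - M) *ᵥ vM) with hW
  set coef : ℝ := 1/(2*lam*(n:ℝ)^2) with hcoef
  have hcoefpos : 0 < coef := by rw [hcoef]; positivity
  -- the two strong-convexity inequalities
  have IG := min_strong hn lam hlam y G hGs cG cM hcG.1 hcG.2 hcM.1
  have IM := min_strong hn lam hlam y M hMs cM cG hcM.1 hcM.2 hcG.1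
  -- rewrite IM's pieces
  have eS : ∑ i, (cG i - cM i)^2 = S := by
    rw [hS]; congr 1; funext i; ring
  have eneg : (fun i => y i * cG i - y i * cM i) = -u := by
    funext i; simp [hu]
  rw [eS, eneg] at IM
  have equ : ((-u) ⬝ᵥ (M *ᵥ (-u))) = u ⬝ᵥ (M *ᵥ u) := by
    simp [Matrix.mulVec_neg, dotProduct_neg, neg_dotProduct]
  rw [equ] at IM
  -- sum of dual gaps equals quadratic expression
  have hgap : (dualObj lam y M cG - dualObj lam y M cM)
      + (dualObj lam y G cM - dualObj lam y G cG)
      = coef * ((vM ⬝ᵥ (G *ᵥ vM)) - (vG ⬝ᵥ (G *ᵥ vG))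
          + (vG ⬝ᵥ (M *ᵥ vG)) - (vM ⬝ᵥ (M *ᵥ vM))) := by
    unfold dualObj
    rw [← hvM, ← hvG, ← hcoef]
    ring
  -- vG = vM - u
  have hvGu : vG = vM - u := by
    funext i; simp [hvG, hvM, hu]
  have hid := key_id G M hGs hMs vM u
  rw [← hvGu] at hid
  -- PSD facts
  have hGpos : 0 ≤ u ⬝ᵥ (G *ᵥ u) := by
    have := hG.dotProduct_mulVec_nonneg u
    simpa using this
  -- combine: (4/n) * S ≤ 2 * coef * (u ⬝ᵥ ((G-M) *ᵥ vM))
  set X : ℝ := u ⬝ᵥ ((G - M) *ᵥ vM) with hX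
  have hmain : (4/n) * S ≤ 2 * coef * X := by
    have h1 : (2/n)*S + coef * ((fun i => y i * cM i - y i * cG i) ⬝ᵥ
        (G *ᵥ fun i => y i * cM i - y i * cG i)) ≤
        dualObj lam y G cM - dualObj lam y G cG := IG
    rw [← hu] at h1
    rw [← hcoef] at IM
    have hgap2 : (dualObj lam y M cG - dualObj lam y M cM)
        + (dualObj lam y G cM - dualObj lam y G cG)
        = 2*(coef*X) - coef*(u ⬝ᵥ (G *ᵥ u)) + coef*(u ⬝ᵥ (M *ᵥ u)) := by
      rw [hgap, hid]; ring
    have hGu := mul_nonneg (le_of_lt hcoefpos) hGpos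
    have hsum := add_le_add IM h1
    rw [hgap2] at hsum
    have goal2 : (4/n) * S + 2*(coef*(u ⬝ᵥ (G *ᵥ u))) ≤ 2*(coef*X) := by
      set a1 : ℝ := u ⬝ᵥ (G *ᵥ u) with ha1
      set a2 : ℝ := u ⬝ᵥ (M *ᵥ u) with ha2
      clear_value S coef X u vM vG W
      have h44 : 4/(n:ℝ)*S = 2/(n:ℝ)*S + 2/(n:ℝ)*S := by ring
      linarith [hsum, h44]
    linarith [goal2, hGu]
  -- Cauchy-Schwarz: X ≤ sqrt S * W
  have hnormu : e2norm u = Real.sqrt S := by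
    unfold e2norm
    congr 1
    rw [hS]
    congr 1; funext i
    rcases hy i with h | h <;> simp [hu, h] <;> ring
  have hXle : X ≤ Real.sqrt S * W := by
    have h1 : |X| ≤ e2norm u * e2norm ((G - M) *ᵥ vM) := abs_dot_le u _
    rw [hnormu, ← hW] at h1
    exact (le_abs_self X).trans h1
  have hWpos : 0 ≤ W := by rw [hW]; exact Real.sqrt_nonneg _
  have hSpos : 0 ≤ S := by rw [hS]; positivity
  -- derive sqrt S ≤ W / (4 lam n)
  have hkey : Real.sqrt S ≤ W / (4 * lam * n) := by
    rcases eq_or_lt_of_le hSpos with h0 | h0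
    · rw [← h0]
      simp only [Real.sqrt_zero]
      positivity
    · set r : ℝ := Real.sqrt S with hrdef
      have hr : 0 < r := Real.sqrt_pos.mpr h0
      have hr2 : r * r = S := Real.mul_self_sqrt hSpos
      have hc : (4/n) * S ≤ 2 * coef * (r * W) := by
        calc (4/n) * S ≤ 2 * coef * X := hmain
        _ ≤ 2 * coef * (r * W) := by
            apply mul_le_mul_of_nonneg_left hXle (by positivity)
      rw [hcoef] at hc
      have h5 : 4*lam*(n:ℝ)*(r*r) ≤ r*W := by
        have hmul := mul_le_mul_of_nonneg_left hc
          (le_of_lt (show (0:ℝ) < lam*(n:ℝ)^2 by positivity))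
        have e1 : lam*(n:ℝ)^2 * ((4/n)*S) = 4*lam*(n:ℝ)*(r*r) := by
          rw [← hr2]; field_simp
        have e2 : lam*(n:ℝ)^2 * (2*(1/(2*lam*(n:ℝ)^2))*(r*W)) = r*W := by
          field_simp
        linarith [hmul, e1.ge, e1.le, e2.ge, e2.le]
      have h5' : (4*lam*(n:ℝ)*r)*r ≤ W*r := by nlinarith [h5]
      have h6 : 4*lam*(n:ℝ)*r ≤ W := le_of_mul_le_mul_right h5' hr
      rw [le_div_iff₀ (by positivity)]
      linarith [h6]
  -- score difference decomposition
  have huv : u = vM - vG := by funext i; simp [hu, hvM, hvG]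
  have hscore : score lam y k cG - score lam y m cM
      = (1/(lam*(n:ℝ))) * (-(k ⬝ᵥ u) + ((k - m) ⬝ᵥ vM)) := by
    unfold score
    rw [← hvM, ← hvG]
    have e : -(k ⬝ᵥ u) + ((k - m) ⬝ᵥ vM) = k ⬝ᵥ vG - m ⬝ᵥ vM := by
      rw [huv, dotProduct_sub, sub_dotProduct]; ring
    rw [e]; ring
  have habs : |score lam y k cG - score lam y m cM| ≤
      (1/(lam*(n:ℝ))) * (|k ⬝ᵥ u| + |(k - m) ⬝ᵥ vM|) := by
    rw [hscore, abs_mul]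
    rw [abs_of_pos (show (0:ℝ) < 1/(lam*(n:ℝ)) by positivity)]
    apply mul_le_mul_of_nonneg_left _ (by positivity)
    exact (abs_add_le _ _).trans (by rw [abs_neg])
  have hku : |k ⬝ᵥ u| ≤ (Kstar * Real.sqrt n) * (W/(4*lam*(n:ℝ))) := by
    calc |k ⬝ᵥ u| ≤ e2norm k * e2norm u := abs_dot_le k u
    _ ≤ (Kstar * Real.sqrt n) * (W/(4*lam*(n:ℝ))) := by
        apply mul_le_mul hk _ (by rw [hnormu]; positivity) (by positivity)
        rw [hnormu]; exact hkey
  have hstep : |score lam y k cG - score lam y m cM| ≤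
      (1/(lam*(n:ℝ))) * ((Kstar * Real.sqrt n) * (W/(4*lam*(n:ℝ))) + |(k - m) ⬝ᵥ vM|) := by
    refine habs.trans ?_
    apply mul_le_mul_of_nonneg_left _ (by positivity)
    exact add_le_add_left hku _
  refine hstep.trans (le_of_eq ?_)
  have hrpow : ((n:ℝ))^((3:ℝ)/2) = (n:ℝ) * Real.sqrt n := by
    rw [show (3:ℝ)/2 = 1 + 1/2 by norm_num, Real.rpow_add hn', Real.rpow_one,
      ← Real.sqrt_eq_rpow]
  rw [hrpow]
  set s : ℝ := Real.sqrt n with hsdef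
  have hspos : 0 < s := Real.sqrt_pos.mpr hn'
  have hsn : (n:ℝ) = s * s := (Real.mul_self_sqrt hn'.le).symm
  rw [hsn]
  field_simp
end

section
/- Let I be a finite index set partitioned as I = I_1 ⊔ ⋯ ⊔ I_m, and let (X_α)_{α ∈ I} be real random variables with |X_α| ≤ L almost surely, such that for each q the family {X_α : α ∈ I_q} is jointly independent. Set S = ∑_{α ∈ I} (X_α − E X_α) and V = ∑_{α ∈ I} Var(X_α). Then for every u > 0, P( |S| > √(2·m·V·u) + (4/3)·m·L·u ) ≤ 2·e^{−u}. -/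
open MeasureTheory ProbabilityTheory

private lemma cb_key_exp_ineq (z : ℝ) : (6 - 2*z) * Real.exp z ≤ z^2 + 4*z + 6 := by
  have base : ∀ x : ℝ, 0 ≤ 2 - (2 - 2*x) * Real.exp x := by
    intro x
    have h1 : 1 - x ≤ Real.exp (-x) := by
      have := Real.add_one_le_exp (-x); linarith
    have h2 : (1 - x) * Real.exp x ≤ 1 := by
      have := mul_le_mul_of_nonneg_right h1 (Real.exp_pos x).le
      rwa [← Real.exp_add, neg_add_cancel, Real.exp_zero] at this
    nlinarith
  have hg'deriv : ∀ x : ℝ, HasDerivAt (fun y : ℝ => 2*y + 4 - (4 - 2*y) * Real.exp y)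
      (2 - (2 - 2*x) * Real.exp x) x := by
    intro x
    have e := Real.hasDerivAt_exp x
    have l1 : HasDerivAt (fun y : ℝ => 4 - 2*y) (-2 : ℝ) x := by
      simpa using ((hasDerivAt_id x).const_mul (2:ℝ)).const_sub (4:ℝ)
    have l2 : HasDerivAt (fun y : ℝ => 2*y + 4) (2 : ℝ) x := by
      simpa using ((hasDerivAt_id x).const_mul (2:ℝ)).add_const (4:ℝ)
    have := l2.sub (l1.mul e)
    exact this.congr_deriv (by ring)
  have hg'mono : Monotone (fun y : ℝ => 2*y + 4 - (4 - 2*y) * Real.exp y) :=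
    monotone_of_deriv_nonneg (fun x => (hg'deriv x).differentiableAt)
      (fun x => by rw [(hg'deriv x).deriv]; exact base x)
  have hg'0 : (fun y : ℝ => 2*y + 4 - (4 - 2*y) * Real.exp y) 0 = 0 := by norm_num
  have hgderiv : ∀ x : ℝ, HasDerivAt (fun y : ℝ => y^2 + 4*y + 6 - (6 - 2*y) * Real.exp y)
      (2*x + 4 - (4 - 2*x) * Real.exp x) x := by
    intro x
    have e := Real.hasDerivAt_exp x
    have l1 : HasDerivAt (fun y : ℝ => 6 - 2*y) (-2 : ℝ) x := by
      simpa using ((hasDerivAt_id x).const_mul (2:ℝ)).const_sub (6:ℝ)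
    have l2 : HasDerivAt (fun y : ℝ => y^2 + 4*y + 6) (2*x + 4) x := by
      have h1 := (hasDerivAt_pow 2 x).add ((hasDerivAt_id x).const_mul (4:ℝ))
      have h2 := h1.add_const (6:ℝ)
      exact h2.congr_deriv (by norm_num)
    have := l2.sub (l1.mul e)
    exact this.congr_deriv (by ring)
  have hg0 : (fun y : ℝ => y^2 + 4*y + 6 - (6 - 2*y) * Real.exp y) 0 = 0 := by norm_num
  have hge : 0 ≤ (fun y : ℝ => y^2 + 4*y + 6 - (6 - 2*y) * Real.exp y) z := by
    rcases le_or_gt 0 z with hz | hz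
    · have hmono : MonotoneOn (fun y : ℝ => y^2 + 4*y + 6 - (6 - 2*y) * Real.exp y)
          (Set.Ici 0) := by
        apply monotoneOn_of_deriv_nonneg (convex_Ici 0)
          (Continuous.continuousOn (by fun_prop))
          (fun x _ => (hgderiv x).differentiableAt.differentiableWithinAt)
        intro x hx
        rw [interior_Ici] at hx
        rw [(hgderiv x).deriv]
        calc (0:ℝ) = 2*(0:ℝ) + 4 - (4 - 2*0) * Real.exp 0 := by norm_num
          _ ≤ 2*x + 4 - (4 - 2*x) * Real.exp x := hg'mono hx.le
      have := hmono (Set.self_mem_Ici) (Set.mem_Ici.2 hz) hz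
      simpa [hg0] using this
    · have hanti : AntitoneOn (fun y : ℝ => y^2 + 4*y + 6 - (6 - 2*y) * Real.exp y)
          (Set.Iic 0) := by
        apply antitoneOn_of_deriv_nonpos (convex_Iic 0)
          (Continuous.continuousOn (by fun_prop))
          (fun x _ => (hgderiv x).differentiableAt.differentiableWithinAt)
        intro x hx
        rw [interior_Iic] at hx
        rw [(hgderiv x).deriv]
        calc 2*x + 4 - (4 - 2*x) * Real.exp x
            ≤ 2*(0:ℝ) + 4 - (4 - 2*0) * Real.exp 0 := hg'mono hx.le
          _ = 0 := by norm_num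
      have := hanti (Set.mem_Iic.2 hz.le) Set.self_mem_Iic hz.le
      simpa [hg0] using this
  simp only at hge
  linarith

private lemma cb_exp_le {z : ℝ} (hz : z < 3) :
    Real.exp z ≤ 1 + z + z^2 / (2 * (1 - z/3)) := by
  have h62 : (0:ℝ) < 2 * (1 - z/3) := by linarith
  have key := cb_key_exp_ineq z
  have h' : (Real.exp z - 1 - z) * (2 * (1 - z/3)) ≤ z^2 := by nlinarith
  have := (div_le_div_iff_of_pos_right h62).mpr h'
  have h2 : Real.exp z - 1 - z ≤ z^2 / (2 * (1 - z/3)) := by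
    rw [← le_div_iff₀ h62] at h'
    exact h'
  linarith

private lemma cb_mgf_le {Ω : Type*} [MeasurableSpace Ω] {μ : Measure Ω} [IsProbabilityMeasure μ]
    {Y : Ω → ℝ} (hY : Measurable Y) {b τ : ℝ} (hτ : 0 ≤ τ)
    (hbdd : ∀ᵐ ω ∂μ, |Y ω| ≤ b) (hmean : ∫ ω, Y ω ∂μ = 0) (hτb : τ * b < 3) :
    mgf Y μ τ ≤ Real.exp (τ^2 * (∫ ω, (Y ω)^2 ∂μ) / (2 * (1 - τ*b/3))) := by
  have hd0 : (0:ℝ) < 1 - τ*b/3 := by linarith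
  set d : ℝ := 1 - τ*b/3 with hd
  have hintY : Integrable Y μ := by
    refine (integrable_const b).mono' hY.aestronglyMeasurable ?_
    filter_upwards [hbdd] with ω h using by simpa [Real.norm_eq_abs] using h
  have hintY2 : Integrable (fun ω => (Y ω)^2) μ := by
    refine (integrable_const (b^2)).mono' (hY.pow_const 2).aestronglyMeasurable ?_
    filter_upwards [hbdd] with ω h
    have h2 : |Y ω|^2 ≤ b^2 := pow_le_pow_left₀ (abs_nonneg _) h 2
    calc ‖(Y ω)^2‖ = |Y ω|^2 := by rw [Real.norm_eq_abs, abs_pow]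
      _ ≤ b^2 := h2
  have hintexp : Integrable (fun ω => Real.exp (τ * Y ω)) μ := by
    refine (integrable_const (Real.exp (τ*b))).mono'
      ((hY.const_mul τ).exp).aestronglyMeasurable ?_
    filter_upwards [hbdd] with ω h
    rw [Real.norm_eq_abs, Real.abs_exp]
    apply Real.exp_le_exp.2
    calc τ * Y ω ≤ τ * |Y ω| := mul_le_mul_of_nonneg_left (le_abs_self _) hτ
      _ ≤ τ * b := mul_le_mul_of_nonneg_left h hτ
  have hpt : ∀ᵐ ω ∂μ, Real.exp (τ * Y ω) ≤ 1 + τ * Y ω + τ^2/(2*d) * (Y ω)^2 := by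
    filter_upwards [hbdd] with ω h
    have habs : τ * Y ω ≤ τ * b := by
      calc τ * Y ω ≤ τ * |Y ω| := mul_le_mul_of_nonneg_left (le_abs_self _) hτ
        _ ≤ τ * b := mul_le_mul_of_nonneg_left h hτ
    have h3 : τ * Y ω < 3 := lt_of_le_of_lt habs hτb
    have hmain := cb_exp_le h3
    have hzz : (τ*Y ω)^2 / (2*(1 - (τ*Y ω)/3)) ≤ (τ*Y ω)^2/(2*d) := by
      apply div_le_div_of_nonneg_left (by positivity) (by positivity)
      rw [hd]; linarith
    have heq : (τ*Y ω)^2/(2*d) = τ^2/(2*d) * (Y ω)^2 := by ring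
    calc Real.exp (τ * Y ω) ≤ 1 + τ*Y ω + (τ*Y ω)^2 / (2*(1 - (τ*Y ω)/3)) := hmain
      _ ≤ 1 + τ*Y ω + (τ*Y ω)^2/(2*d) := by linarith
      _ = 1 + τ*Y ω + τ^2/(2*d) * (Y ω)^2 := by rw [heq]
  have hI2 : 0 ≤ ∫ ω, (Y ω)^2 ∂μ := integral_nonneg fun ω => sq_nonneg _
  have hintbound : mgf Y μ τ ≤ 1 + τ^2/(2*d) * ∫ ω, (Y ω)^2 ∂μ := by
    have h1 : mgf Y μ τ = ∫ ω, Real.exp (τ * Y ω) ∂μ := rfl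
    rw [h1]
    have hRHSint : Integrable (fun ω => 1 + τ * Y ω + τ^2/(2*d) * (Y ω)^2) μ :=
      ((integrable_const (1:ℝ)).add (hintY.const_mul τ)).add (hintY2.const_mul _)
    calc ∫ ω, Real.exp (τ * Y ω) ∂μ
        ≤ ∫ ω, (1 + τ * Y ω + τ^2/(2*d) * (Y ω)^2) ∂μ :=
          integral_mono_ae hintexp hRHSint hpt
      _ = 1 + τ^2/(2*d) * ∫ ω, (Y ω)^2 ∂μ := by
          have i1 : Integrable (fun ω => 1 + τ * Y ω) μ :=
            (integrable_const (1:ℝ)).add (hintY.const_mul τ)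
          have i2 : Integrable (fun ω => τ^2/(2*d) * (Y ω)^2) μ := hintY2.const_mul _
          have i3 : Integrable (fun _ : Ω => (1:ℝ)) μ := integrable_const 1
          have i4 : Integrable (fun ω => τ * Y ω) μ := hintY.const_mul τ
          rw [integral_add i1 i2, integral_add i3 i4,
            integral_const, integral_const_mul, integral_const_mul, hmean]
          simp
  have hA : 0 ≤ τ^2/(2*d) * ∫ ω, (Y ω)^2 ∂μ := by positivity
  have hfin : 1 + τ^2/(2*d) * ∫ ω, (Y ω)^2 ∂μ
      ≤ Real.exp (τ^2/(2*d) * ∫ ω, (Y ω)^2 ∂μ) := by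
    have := Real.add_one_le_exp (τ^2/(2*d) * ∫ ω, (Y ω)^2 ∂μ)
    linarith
  have heq2 : τ^2/(2*d) * ∫ ω, (Y ω)^2 ∂μ = τ^2 * (∫ ω, (Y ω)^2 ∂μ) / (2*d) := by ring
  calc mgf Y μ τ ≤ 1 + τ^2/(2*d) * ∫ ω, (Y ω)^2 ∂μ := hintbound
    _ ≤ Real.exp (τ^2/(2*d) * ∫ ω, (Y ω)^2 ∂μ) := hfin
    _ = Real.exp (τ^2 * (∫ ω, (Y ω)^2 ∂μ) / (2 * (1 - τ*b/3))) := by rw [heq2, hd]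

private lemma cb_choose_t {a c u : ℝ} (ha : 0 ≤ a) (hc : 0 < c) (hu : 0 < u) :
    ∃ t : ℝ, 0 ≤ t ∧ c*t < 1 ∧
      -t * (Real.sqrt (2*a*u) + 2*c*u) + a*t^2/(2*(1-c*t)) ≤ -u := by
  rcases ha.eq_or_lt with h0 | hpos
  · refine ⟨1/(2*c), by positivity, ?_, ?_⟩
    · have h : c*(1/(2*c)) = 1/2 := by field_simp
      rw [h]; norm_num
    · rw [← h0]
      have hs : Real.sqrt (2*0*u) = 0 := by norm_num
      rw [hs]
      have h1 : c*(1/(2*c)) = 1/2 := by field_simp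
      rw [h1]
      have h2 : -(1/(2*c)) * (0 + 2*c*u) = -u := by field_simp; ring
      rw [h2]
      norm_num
  · set s : ℝ := Real.sqrt (2*u/a) with hsdef
    have hs0 : 0 < s := Real.sqrt_pos.2 (by positivity)
    have hs2 : s^2 = 2*u/a := Real.sq_sqrt (by positivity)
    have has2 : a * s^2 = 2*u := by rw [hs2]; field_simp
    have hP : 0 < 1 + c*s := by positivity
    refine ⟨s/(1+c*s), by positivity, ?_, ?_⟩
    · have h : c*(s/(1+c*s)) = c*s/(1+c*s) := by ring
      rw [h, div_lt_one hP]
      linarith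
    · have hsqrt : Real.sqrt (2*a*u) = a*s := by
        rw [hsdef, show 2*a*u = a^2*(2*u/a) from by field_simp,
          Real.sqrt_mul (by positivity) , Real.sqrt_sq hpos.le]
      rw [hsqrt]
      have h1ct : 1 - c*(s/(1+c*s)) = 1/(1+c*s) := by field_simp; ring
      rw [h1ct]
      have ha_eq : a = 2*u/s^2 := by
        rw [eq_div_iff (by positivity : (s:ℝ)^2 ≠ 0)]
        linarith [has2]
      rw [ha_eq]
      have hE : -(s/(1+c*s)) * ((2*u/s^2)*s + 2*c*u)
            + (2*u/s^2)*(s/(1+c*s))^2/(2*(1/(1+c*s)))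
          = -((u + 2*c*u*s)/(1+c*s)) := by
        field_simp
        ring
      rw [hE, neg_le_neg_iff, le_div_iff₀ hP]
      nlinarith [mul_nonneg (mul_nonneg hc.le hu.le) hs0.le]

private lemma cb_one_sided
    {Ω : Type*} [MeasurableSpace Ω] (μ : Measure Ω) [IsProbabilityMeasure μ]
    {ι : Type*} [Fintype ι] (m : ℕ) (hm : 0 < m)
    (part : ι → Fin m)
    (X : ι → Ω → ℝ) (hXmeas : ∀ α, Measurable (X α))
    (L : ℝ) (hL : 0 < L)
    (hbdd : ∀ α, ∀ᵐ ω ∂μ, |X α ω| ≤ L)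
    (hindep : ∀ q : Fin m,
      iIndepFun
        (fun α : {a : ι // part a = q} => X α.1) μ)
    (V : ℝ) (hV : V = ∑ α, variance (X α) μ)
    (u : ℝ) (hu : 0 < u) :
    μ {ω | Real.sqrt (2 * m * V * u) + (4 / 3) * m * L * u ≤
        ∑ α, (X α ω - ∫ ω', X α ω' ∂μ)} ≤ ENNReal.ofReal (Real.exp (-u)) := by
  classical
  have hm' : (0:ℝ) < m := by exact_mod_cast hm
  set Y : ι → Ω → ℝ := fun α ω => X α ω - ∫ ω', X α ω' ∂μ with hYdef
  have hYmeas : ∀ α, Measurable (Y α) := fun α => (hXmeas α).sub measurable_const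
  have hintX : ∀ α, Integrable (X α) μ := by
    intro α
    refine (integrable_const L).mono' (hXmeas α).aestronglyMeasurable ?_
    filter_upwards [hbdd α] with ω h using by simpa [Real.norm_eq_abs] using h
  have hEX : ∀ α, |∫ ω', X α ω' ∂μ| ≤ L := by
    intro α
    calc |∫ ω', X α ω' ∂μ| ≤ ∫ ω', |X α ω'| ∂μ := by
          simpa [Real.norm_eq_abs] using norm_integral_le_integral_norm (μ := μ) (X α)
      _ ≤ ∫ _ω', L ∂μ := integral_mono_ae (hintX α).abs (integrable_const L) (hbdd α)
      _ = L := by simp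
  have hYbdd : ∀ α, ∀ᵐ ω ∂μ, |Y α ω| ≤ 2*L := by
    intro α
    filter_upwards [hbdd α] with ω h
    have h2 := hEX α
    calc |Y α ω| ≤ |X α ω| + |∫ ω', X α ω' ∂μ| := by
          rw [hYdef]
          exact abs_sub _ _
      _ ≤ L + L := add_le_add h h2
      _ = 2*L := by ring
  have hYmean : ∀ α, ∫ ω, Y α ω ∂μ = 0 := by
    intro α
    rw [hYdef]
    rw [integral_sub (hintX α) (integrable_const _), integral_const]
    simp
  have hXmem : ∀ α, MemLp (X α) 2 μ := fun α =>
    (memLp_top_of_bound (hXmeas α).aestronglyMeasurable L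
      ((hbdd α).mono fun ω h => by simpa [Real.norm_eq_abs] using h)).mono_exponent
        le_top
  have hYsq : ∀ α, ∫ ω, (Y α ω)^2 ∂μ = variance (X α) μ := by
    intro α
    rw [variance_eq_integral (hXmem α).aemeasurable]
  have hVnn : 0 ≤ V := hV ▸ Finset.sum_nonneg fun α _ => variance_nonneg _ _
  set c : ℝ := 2/3 * m * L with hc
  have hc0 : 0 < c := by positivity
  obtain ⟨t, ht0, hct, hexpo⟩ := cb_choose_t (a := (m:ℝ)*V) (by positivity) hc0 hu
  set ε : ℝ := Real.sqrt (2 * m * V * u) + (4 / 3) * m * L * u with hε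
  have hεeq : ε = Real.sqrt (2*((m:ℝ)*V)*u) + 2*c*u := by
    rw [hε, show (2:ℝ) * m * V * u = 2*((m:ℝ)*V)*u from by ring, hc]
    ring
  set τ : ℝ := m * t with hτdef
  have hτ0 : 0 ≤ τ := by positivity
  have hD : τ * (2*L) / 3 = c * t := by rw [hτdef, hc]; ring
  have hτb : τ * (2*L) < 3 := by
    have h : τ * (2*L) = 3 * (c*t) := by rw [hτdef, hc]; ring
    rw [h]; linarith
  -- general integrability helper
  have key_int : ∀ (f : Ω → ℝ) (C : ℝ), Measurable f → (∀ᵐ ω ∂μ, |f ω| ≤ C) →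
      ∀ r : ℝ, Integrable (fun ω => Real.exp (r * f ω)) μ := by
    intro f C hf hbd r
    refine (integrable_const (Real.exp (|r| * C))).mono'
      ((hf.const_mul r).exp).aestronglyMeasurable ?_
    filter_upwards [hbd] with ω h
    rw [Real.norm_eq_abs, Real.abs_exp]
    apply Real.exp_le_exp.2
    calc r * f ω ≤ |r * f ω| := le_abs_self _
      _ = |r| * |f ω| := abs_mul _ _
      _ ≤ |r| * C := mul_le_mul_of_nonneg_left h (abs_nonneg r)
  -- classes
  set T : Fin m → Ω → ℝ := fun q => ∑ α : {a : ι // part a = q}, Y α.1 with hT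
  have hTapp : ∀ q ω, T q ω = ∑ α : {a : ι // part a = q}, Y α.1 ω := by
    intro q ω; rw [hT]; simp [Finset.sum_apply]
  have hTmeas : ∀ q, Measurable (T q) := by
    intro q
    have h : T q = fun ω => ∑ α : {a : ι // part a = q}, Y α.1 ω := funext (hTapp q)
    rw [h]
    exact Finset.measurable_sum _ fun α _ => hYmeas α.1
  have hTbdd : ∀ q, ∀ᵐ ω ∂μ,
      |T q ω| ≤ 2*L*(Fintype.card {a : ι // part a = q}) := by
    intro q
    have hall := ae_all_iff.2 (fun α : {a : ι // part a = q} => hYbdd α.1)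
    filter_upwards [hall] with ω h
    rw [hTapp]
    calc |∑ α : {a : ι // part a = q}, Y α.1 ω|
        ≤ ∑ α : {a : ι // part a = q}, |Y α.1 ω| := Finset.abs_sum_le_sum_abs _ _
      _ ≤ ∑ _α : {a : ι // part a = q}, 2*L := Finset.sum_le_sum fun α _ => h α
      _ = 2*L*(Fintype.card {a : ι // part a = q}) := by
          rw [Finset.sum_const, Finset.card_univ, nsmul_eq_mul, mul_comm]
  have hYindep : ∀ q, iIndepFun
      (fun α : {a : ι // part a = q} => Y α.1) μ := by
    intro q
    have h := (hindep q).comp (fun α : {a : ι // part a = q} =>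
      fun x : ℝ => x - ∫ ω', X α.1 ω' ∂μ) (fun α => measurable_id.sub measurable_const)
    exact h
  set Vq : Fin m → ℝ := fun q => ∑ α : {a : ι // part a = q}, variance (X α.1) μ with hVq
  have hVsum : ∑ q, Vq q = V := by
    rw [hVq, hV]
    exact Fintype.sum_fiberwise part fun α => variance (X α) μ
  have hmgfq : ∀ q, mgf (T q) μ τ ≤ Real.exp (τ^2 * Vq q / (2 * (1 - c*t))) := by
    intro q
    rw [hT, (hYindep q).mgf_sum (fun α => hYmeas α.1) Finset.univ]
    calc ∏ α : {a : ι // part a = q}, mgf (Y α.1) μ τ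
        ≤ ∏ α : {a : ι // part a = q},
            Real.exp (τ^2 * (∫ ω, (Y α.1 ω)^2 ∂μ) / (2*(1 - τ*(2*L)/3))) :=
          Finset.prod_le_prod (fun α _ => mgf_nonneg) (fun α _ =>
            cb_mgf_le (hYmeas α.1) hτ0 (hYbdd α.1) (hYmean α.1) hτb)
      _ = Real.exp (τ^2 * Vq q / (2*(1 - c*t))) := by
          rw [← Real.exp_sum]
          congr 1
          rw [hVq, Finset.mul_sum, Finset.sum_div]
          exact Finset.sum_congr rfl fun α _ => by rw [hYsq α.1, hD]
  -- total sum
  set S : Ω → ℝ := fun ω => ∑ α, Y α ω with hS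
  have hSmeas : Measurable S := Finset.measurable_sum _ fun α _ => hYmeas α
  have hSsplit : ∀ ω, S ω = ∑ q, T q ω := by
    intro ω
    rw [hS]
    simp only [hTapp]
    exact (Fintype.sum_fiberwise part fun α => Y α ω).symm
  have hSbdd : ∀ᵐ ω ∂μ, |S ω| ≤ 2*L*(Fintype.card ι) := by
    have hall := ae_all_iff.2 hYbdd
    filter_upwards [hall] with ω h
    rw [hS]
    calc |∑ α, Y α ω| ≤ ∑ α, |Y α ω| := Finset.abs_sum_le_sum_abs _ _
      _ ≤ ∑ _α : ι, 2*L := Finset.sum_le_sum fun α _ => h α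
      _ = 2*L*(Fintype.card ι) := by
          rw [Finset.sum_const, Finset.card_univ, nsmul_eq_mul, mul_comm]
  have hintS : ∀ r : ℝ, Integrable (fun ω => Real.exp (r * S ω)) μ :=
    key_int S _ hSmeas hSbdd
  have hintT : ∀ q (r : ℝ), Integrable (fun ω => Real.exp (r * T q ω)) μ :=
    fun q => key_int (T q) _ (hTmeas q) (hTbdd q)
  -- Hölder
  have hmgfS : mgf S μ t ≤ Real.exp ((m:ℝ)*V*t^2 / (2 * (1 - c*t))) := by
    have hmain : ENNReal.ofReal (mgf S μ t)
        ≤ ENNReal.ofReal (Real.exp ((m:ℝ)*V*t^2/(2*(1-c*t)))) := by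
      have h1 : ENNReal.ofReal (mgf S μ t) = ∫⁻ ω, ENNReal.ofReal (Real.exp (t * S ω)) ∂μ :=
        ofReal_integral_eq_lintegral_ofReal (hintS t)
          (Filter.Eventually.of_forall fun ω => (Real.exp_pos _).le)
      have h2 : ∀ ω, ENNReal.ofReal (Real.exp (t * S ω)) =
          ∏ q, (ENNReal.ofReal (Real.exp (τ * T q ω))) ^ ((m:ℝ)⁻¹) := by
        intro ω
        have hsum : t * S ω = ∑ q, t * T q ω := by rw [hSsplit ω, Finset.mul_sum]
        rw [hsum, Real.exp_sum, ENNReal.ofReal_prod_of_nonneg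
          (fun q _ => (Real.exp_pos _).le)]
        refine Finset.prod_congr rfl fun q _ => ?_
        rw [ENNReal.ofReal_rpow_of_pos (Real.exp_pos _), ← Real.exp_mul]
        congr 1
        rw [hτdef]
        field_simp
      have h3 := ENNReal.lintegral_prod_norm_pow_le (μ := μ) Finset.univ
        (f := fun q ω => ENNReal.ofReal (Real.exp (τ * T q ω)))
        (fun q _ => (ENNReal.measurable_ofReal.comp
          ((hTmeas q).const_mul τ).exp).aemeasurable)
        (p := fun _ => (m:ℝ)⁻¹)
        (by
          rw [Finset.sum_const, Finset.card_univ, Fintype.card_fin, nsmul_eq_mul]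
          field_simp)
        (fun q _ => by positivity)
      have h4 : ∀ q, (∫⁻ ω, ENNReal.ofReal (Real.exp (τ * T q ω)) ∂μ) =
          ENNReal.ofReal (mgf (T q) μ τ) :=
        fun q => (ofReal_integral_eq_lintegral_ofReal (hintT q τ)
          (Filter.Eventually.of_forall fun ω => (Real.exp_pos _).le)).symm
      rw [h1, lintegral_congr h2]
      refine h3.trans ?_
      calc ∏ q, (∫⁻ ω, ENNReal.ofReal (Real.exp (τ * T q ω)) ∂μ) ^ ((m:ℝ)⁻¹)
          ≤ ∏ q, (ENNReal.ofReal (Real.exp (τ^2 * Vq q / (2*(1 - c*t))))) ^ ((m:ℝ)⁻¹) := by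
            refine Finset.prod_le_prod' fun q _ => ?_
            refine ENNReal.rpow_le_rpow ?_ (by positivity)
            rw [h4 q]
            exact ENNReal.ofReal_le_ofReal (hmgfq q)
        _ = ENNReal.ofReal (Real.exp ((m:ℝ)*V*t^2/(2*(1-c*t)))) := by
            have h5 : ∀ q : Fin m,
                (ENNReal.ofReal (Real.exp (τ^2 * Vq q / (2*(1 - c*t))))) ^ ((m:ℝ)⁻¹)
                = ENNReal.ofReal (Real.exp (τ^2 * Vq q / (2*(1 - c*t)) * (m:ℝ)⁻¹)) := by
              intro q
              rw [ENNReal.ofReal_rpow_of_pos (Real.exp_pos _), ← Real.exp_mul]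
            simp only [h5]
            rw [← ENNReal.ofReal_prod_of_nonneg (fun q _ => (Real.exp_pos _).le),
              ← Real.exp_sum]
            congr 1
            have h6 : ∑ q, τ^2 * Vq q / (2*(1 - c*t)) * (m:ℝ)⁻¹
                = τ^2 * (∑ q, Vq q) / (2*(1 - c*t)) * (m:ℝ)⁻¹ := by
              rw [Finset.mul_sum, Finset.sum_div, Finset.sum_mul]
            rw [h6, hVsum, hτdef]
            have hD0 : (1:ℝ) - c*t > 0 := by linarith
            field_simp
    exact (ENNReal.ofReal_le_ofReal_iff (Real.exp_pos _).le).1 hmain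
  -- Chernoff
  have hch := measure_ge_le_exp_mul_mgf (μ := μ) (X := S) (t := t) ε ht0 (hintS t)
  have hfinal : (μ {ω | ε ≤ S ω}).toReal ≤ Real.exp (-u) := by
    calc (μ {ω | ε ≤ S ω}).toReal ≤ Real.exp (-t*ε) * mgf S μ t := hch
      _ ≤ Real.exp (-t*ε) * Real.exp ((m:ℝ)*V*t^2/(2*(1-c*t))) := by
          exact mul_le_mul_of_nonneg_left hmgfS (Real.exp_pos _).le
      _ = Real.exp (-t*ε + (m:ℝ)*V*t^2/(2*(1-c*t))) := (Real.exp_add _ _).symm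
      _ ≤ Real.exp (-u) := by
          apply Real.exp_le_exp.2
          rw [hεeq]
          linarith [hexpo]
  have hμset : μ {ω | ε ≤ S ω} ≤ ENNReal.ofReal (Real.exp (-u)) := by
    rw [← ENNReal.ofReal_toReal (measure_ne_top μ _)]
    exact ENNReal.ofReal_le_ofReal hfinal
  exact hμset

/-- Colored Bernstein inequality: if a finite family of bounded random variables is
partitioned into `m` classes, each class jointly independent, then the centered sum
`S = ∑_α (X_α − E X_α)` satisfies, for every `u > 0`,
`P( |S| > √(2·m·V·u) + (4/3)·m·L·u ) ≤ 2·e^{−u}`, where `V = ∑_α Var(X_α)`. -/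
theorem colored_bernstein
    {Ω : Type*} [MeasurableSpace Ω] (μ : Measure Ω) [IsProbabilityMeasure μ]
    {ι : Type*} [Fintype ι] (m : ℕ) (hm : 0 < m)
    (part : ι → Fin m)
    (X : ι → Ω → ℝ) (hXmeas : ∀ α, Measurable (X α))
    (L : ℝ) (hL : 0 < L)
    (hbdd : ∀ α, ∀ᵐ ω ∂μ, |X α ω| ≤ L)
    (hindep : ∀ q : Fin m,
      iIndepFun
        (fun α : {a : ι // part a = q} => X α.1) μ)
    (V : ℝ) (hV : V = ∑ α, variance (X α) μ)
    (u : ℝ) (hu : 0 < u) :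
    μ {ω | Real.sqrt (2 * m * V * u) + (4 / 3) * m * L * u <
        |∑ α, (X α ω - ∫ ω', X α ω' ∂μ)|} ≤
      ENNReal.ofReal (2 * Real.exp (-u)) := by
  classical
  set S : Ω → ℝ := fun ω => ∑ α, (X α ω - ∫ ω', X α ω' ∂μ) with hS
  set ε : ℝ := Real.sqrt (2 * m * V * u) + (4 / 3) * m * L * u with hε
  have h1 : μ {ω | ε ≤ S ω} ≤ ENNReal.ofReal (Real.exp (-u)) :=
    cb_one_sided μ m hm part X hXmeas L hL hbdd hindep V hV u hu
  have hVneg : V = ∑ α, variance (-X α) μ := by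
    rw [hV]
    refine Finset.sum_congr rfl fun α _ => ?_
    have h : (-X α : Ω → ℝ) = fun ω => (-1 : ℝ) * X α ω := by
      funext ω; simp
    rw [h, variance_const_mul]
    norm_num
  have h2 : μ {ω | ε ≤ -S ω} ≤ ENNReal.ofReal (Real.exp (-u)) := by
    have hneg := cb_one_sided μ m hm part (fun α => -X α) (fun α => (hXmeas α).neg) L hL
      (fun α => (hbdd α).mono fun ω h => by simpa [abs_neg] using h)
      (fun q => by
        have h := (hindep q).comp (fun _ : {a : ι // part a = q} => fun x : ℝ => -x)
          (fun _ => measurable_neg)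
        exact h)
      V hVneg u hu
    have hseteq : {ω | Real.sqrt (2 * m * V * u) + (4 / 3) * m * L * u ≤
        ∑ α, ((fun α => -X α) α ω - ∫ ω', (fun α => -X α) α ω' ∂μ)} = {ω | ε ≤ -S ω} := by
      ext ω
      simp only [Set.mem_setOf_eq, hε, hS]
      have heq : ∑ α, ((-X α) ω - ∫ ω', (-X α) ω' ∂μ)
          = -∑ α, (X α ω - ∫ ω', X α ω' ∂μ) := by
        rw [← Finset.sum_neg_distrib]
        refine Finset.sum_congr rfl fun α _ => ?_
        simp only [Pi.neg_apply, integral_neg]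
        ring
      rw [heq]
    rw [hseteq] at hneg
    exact hneg
  have hsub : {ω | ε < |S ω|} ⊆ {ω | ε ≤ S ω} ∪ {ω | ε ≤ -S ω} := by
    intro ω hω
    simp only [Set.mem_setOf_eq] at hω
    rcases abs_cases (S ω) with ⟨he, _⟩ | ⟨he, _⟩
    · left; exact le_of_lt (he ▸ hω)
    · right; exact le_of_lt (he ▸ hω)
  calc μ {ω | ε < |S ω|} ≤ μ ({ω | ε ≤ S ω} ∪ {ω | ε ≤ -S ω}) := measure_mono hsub
    _ ≤ μ {ω | ε ≤ S ω} + μ {ω | ε ≤ -S ω} := measure_union_le _ _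
    _ ≤ ENNReal.ofReal (Real.exp (-u)) + ENNReal.ofReal (Real.exp (-u)) := add_le_add h1 h2
    _ = ENNReal.ofReal (2 * Real.exp (-u)) := by
        rw [← ENNReal.ofReal_add (Real.exp_pos _).le (Real.exp_pos _).le]
        congr 1
        ring
end
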